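/- arXiv:math/0109074 — 8 statements merged into one kernel-verified Lean document; each statement's English description precedes it below -/
import Mathlib

section
/- Let P be an n×n nonnegative matrix and b a nonnegative vector. Then the local spectral radius ρ_b(P) equals the maximum of ρ(P_{αα}) over all classes α of P having access to supp(b). -/
open Filter Matrix
open scoped Topology Classical

attribute [local instance] Matrix.linftyOpNormedAddCommGroup

/-- The local spectral radius of `P` at `b`, defined as `limsup ‖P^m b‖^(1/m)`. -/
noncomputable def localRho {n : ℕ} (A : Matrix (Fin n) (Fin n) ℝ) (b : Fin n → ℝ) : ℝ :=
  limsup (fun m : ℕ => ‖(A ^ m).mulVec b‖ ^ ((1 : ℝ) / m)) atTop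

/-- The spectral radius of a real matrix, via Gelfand's formula. -/
noncomputable def rho {n : ℕ} (A : Matrix (Fin n) (Fin n) ℝ) : ℝ :=
  limsup (fun m : ℕ => ‖A ^ m‖ ^ ((1 : ℝ) / m)) atTop

/-- `i` has access to `j` in the directed graph of `P` (edges where `P a b > 0`). -/
def Access {n : ℕ} (P : Matrix (Fin n) (Fin n) ℝ) (i j : Fin n) : Prop :=
  Relation.ReflTransGen (fun a b => 0 < P a b) i j

/-- The matrix obtained from `P` by zeroing all entries outside `α × α`, where `α` is the
class (strongly connected component) of the vertex `i`; its spectral radius is `ρ(P_{αα})`. -/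
noncomputable def classMatrix {n : ℕ} (P : Matrix (Fin n) (Fin n) ℝ) (i : Fin n) :
    Matrix (Fin n) (Fin n) ℝ :=
  fun a b =>
    if (Access P i a ∧ Access P a i) ∧ (Access P i b ∧ Access P b i) then P a b else 0


namespace Stmt7Aux

/-- growth rate of a nonnegative sequence -/
noncomputable def gr (f : ℕ → ℝ) : ℝ := limsup (fun m : ℕ => f m ^ ((1 : ℝ) / m)) atTop

lemma grSeq_nonneg {f : ℕ → ℝ} (hf : ∀ m, 0 ≤ f m) (m : ℕ) :
    0 ≤ f m ^ ((1 : ℝ) / m) := Real.rpow_nonneg (hf m) _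

lemma cobdd {f : ℕ → ℝ} (hf : ∀ m, 0 ≤ f m) :
    IsCoboundedUnder (· ≤ ·) atTop (fun m : ℕ => f m ^ ((1 : ℝ) / m)) := by
  exact Filter.IsBounded.isCobounded_flip
    (isBoundedUnder_of ⟨0, fun m => grSeq_nonneg hf m⟩)

lemma pow_one_div_self (x : ℝ) (hx : 0 ≤ x) {m : ℕ} (hm : m ≠ 0) :
    (x ^ m) ^ ((1 : ℝ) / m) = x := by
  rw [one_div]; exact Real.pow_rpow_inv_natCast hx hm

lemma one_div_self_pow (x : ℝ) (hx : 0 ≤ x) {m : ℕ} (hm : m ≠ 0) :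
    (x ^ ((1 : ℝ) / m)) ^ m = x := by
  rw [one_div]; exact Real.rpow_inv_natCast_pow hx hm

/-- boundedness of the root sequence from a geometric bound -/
lemma bdd {f : ℕ → ℝ} (hf : ∀ m, 0 ≤ f m) {C s : ℝ} (hs : 0 ≤ s)
    (h : ∀ m, f m ≤ C * s ^ m) :
    IsBoundedUnder (· ≤ ·) atTop (fun m : ℕ => f m ^ ((1 : ℝ) / m)) := by
  refine isBoundedUnder_of ⟨max C 1 * max s 1, fun m => ?_⟩
  rcases Nat.eq_zero_or_pos m with hm | hm
  · subst hm
    simp only [Nat.cast_zero, div_zero, Real.rpow_zero]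
    have h1 : (1:ℝ) ≤ max C 1 := le_max_right _ _
    have h2 : (1:ℝ) ≤ max s 1 := le_max_right _ _
    nlinarith
  · have hm0 : m ≠ 0 := hm.ne'
    have hCs : f m ≤ max C 1 * (max s 1) ^ m := by
      calc f m ≤ C * s ^ m := h m
        _ ≤ max C 1 * s ^ m :=
            mul_le_mul_of_nonneg_right (le_max_left _ _) (pow_nonneg hs m)
        _ ≤ max C 1 * (max s 1) ^ m :=
            mul_le_mul_of_nonneg_left
              (pow_le_pow_left₀ hs (le_max_left _ _) m)
              (le_trans zero_le_one (le_max_right _ _))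
    calc f m ^ ((1:ℝ)/m) ≤ (max C 1 * (max s 1) ^ m) ^ ((1:ℝ)/m) := by
          apply Real.rpow_le_rpow (hf m) hCs (by positivity)
      _ = (max C 1) ^ ((1:ℝ)/m) * ((max s 1) ^ m) ^ ((1:ℝ)/m) := by
          apply Real.mul_rpow (by positivity) (by positivity)
      _ = (max C 1) ^ ((1:ℝ)/m) * max s 1 := by
          rw [pow_one_div_self _ (by positivity) hm0]
      _ ≤ max C 1 * max s 1 := by
          have : (max C 1) ^ ((1:ℝ)/m) ≤ (max C 1) ^ (1:ℝ) := by
            apply Real.rpow_le_rpow_of_exponent_le (le_max_right _ _)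
            rw [div_le_one (by exact_mod_cast hm)]
            exact_mod_cast hm
          rw [Real.rpow_one] at this
          have hs1 : (0:ℝ) ≤ max s 1 := by positivity
          nlinarith [Real.rpow_nonneg (le_trans zero_le_one (le_max_right C 1) : (0:ℝ) ≤ max C 1) ((1:ℝ)/m)]

lemma gr_nonneg {f : ℕ → ℝ} (hf : ∀ m, 0 ≤ f m)
    (hb : IsBoundedUnder (· ≤ ·) atTop (fun m : ℕ => f m ^ ((1 : ℝ) / m))) :
    0 ≤ gr f := by
  apply le_limsup_of_frequently_le _ hb
  exact Frequently.of_forall fun m => grSeq_nonneg hf m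

/-- main upper bound lemma: polynomial-geometric bounds give growth rate bounds -/
lemma gr_le {f : ℕ → ℝ} (hf : ∀ m, 0 ≤ f m) {L : ℝ} (hL : 0 ≤ L)
    (h : ∀ ε > (0:ℝ), ∃ C > (0:ℝ), ∀ m, f m ≤ C * (m + 1) * (L + ε) ^ m) :
    gr f ≤ L := by
  by_contra hcon
  push_neg at hcon
  set c := (L + gr f) / 2 with hc
  have hLc : L < c := by rw [hc]; linarith
  have hcg : c < gr f := by rw [hc]; linarith
  have hc0 : 0 < c := lt_of_le_of_lt hL hLc
  obtain ⟨C, hC, hCb⟩ := h ((c - L) / 2) (by linarith)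
  set s := L + (c - L) / 2 with hs
  have hs0 : 0 < s := by rw [hs]; linarith
  have hsc : s < c := by rw [hs]; linarith
  -- eventually C * (m+1) * s^m ≤ c^m
  have hr : s / c < 1 := (div_lt_one hc0).mpr hsc
  have hr0 : 0 ≤ s / c := le_of_lt (div_pos hs0 hc0)
  have htend : Tendsto (fun m : ℕ => C * ((m:ℝ) ^ (1:ℕ) * (s/c) ^ m + (s/c) ^ m))
      atTop (𝓝 (C * (0 + 0))) := by
    apply Tendsto.const_mul
    exact Tendsto.add (tendsto_pow_const_mul_const_pow_of_lt_one 1 hr0 hr)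
      (tendsto_pow_atTop_nhds_zero_of_lt_one hr0 hr)
  have hev : ∀ᶠ m : ℕ in atTop, f m ^ ((1:ℝ)/m) ≤ c := by
    have hev1 : ∀ᶠ m : ℕ in atTop,
        C * ((m:ℝ) ^ (1:ℕ) * (s/c) ^ m + (s/c) ^ m) ≤ 1 := by
      apply Filter.Tendsto.eventually_le_const _ htend
      norm_num
    filter_upwards [hev1, eventually_ge_atTop 1] with m h1 hm1
    have hm0 : m ≠ 0 := by omega
    have hfm : f m ≤ c ^ m := by
      have e1 : f m ≤ C * (m + 1) * s ^ m := hCb m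
      have e2 : C * ((m:ℝ) + 1) * s ^ m ≤ c ^ m := by
        have key : C * ((m:ℝ) + 1) * (s/c) ^ m ≤ 1 := by
          have : (m:ℝ) ^ (1:ℕ) * (s/c) ^ m + (s/c) ^ m = ((m:ℝ) + 1) * (s/c) ^ m := by ring
          rw [this] at h1
          calc C * ((m:ℝ) + 1) * (s/c) ^ m = C * (((m:ℝ) + 1) * (s/c) ^ m) := by ring
            _ ≤ 1 := h1
        have hcm : (0:ℝ) < c ^ m := pow_pos hc0 m
        have expand : (s/c) ^ m = s ^ m / c ^ m := div_pow s c m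
        rw [expand] at key
        calc C * ((m:ℝ) + 1) * s ^ m = (C * ((m:ℝ)+1) * (s ^ m / c ^ m)) * c ^ m := by
              field_simp
          _ ≤ 1 * c ^ m := by
              exact mul_le_mul_of_nonneg_right key (le_of_lt hcm)
          _ = c ^ m := one_mul _
      exact e1.trans e2
    calc f m ^ ((1:ℝ)/m) ≤ (c ^ m) ^ ((1:ℝ)/m) :=
          Real.rpow_le_rpow (hf m) hfm (by positivity)
      _ = c := pow_one_div_self c (le_of_lt hc0) hm0
  have : gr f ≤ c := limsup_le_of_le (cobdd hf) hev
  linarith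

/-- extraction: growth rate bound gives uniform geometric bounds -/
lemma gr_ev {f : ℕ → ℝ} (hf : ∀ m, 0 ≤ f m)
    (hb : IsBoundedUnder (· ≤ ·) atTop (fun m : ℕ => f m ^ ((1 : ℝ) / m)))
    {L : ℝ} (hL0 : 0 ≤ L) (hL : gr f ≤ L) :
    ∀ ε > (0:ℝ), ∃ C > (0:ℝ), ∀ m, f m ≤ C * (L + ε) ^ m := by
  intro ε hε
  have hLε : 0 < L + ε := by linarith
  have hev : ∀ᶠ m : ℕ in atTop, f m ^ ((1:ℝ)/m) < L + ε :=
    eventually_lt_of_limsup_lt (lt_of_le_of_lt hL (by linarith)) hb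
  obtain ⟨N, hN⟩ := eventually_atTop.mp hev
  set C := 1 + ∑ t ∈ Finset.range (N + 1), f t / (L + ε) ^ t with hC
  have hC1 : (1:ℝ) ≤ C := by
    rw [hC]
    have : 0 ≤ ∑ t ∈ Finset.range (N + 1), f t / (L + ε) ^ t :=
      Finset.sum_nonneg fun t _ => div_nonneg (hf t) (le_of_lt (pow_pos hLε t))
    linarith
  refine ⟨C, by linarith, fun m => ?_⟩
  rcases le_or_gt m N with hm | hm
  · have hmem : m ∈ Finset.range (N + 1) := Finset.mem_range.mpr (by omega)
    have : f m / (L + ε) ^ m ≤ C := by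
      rw [hC]
      have := Finset.single_le_sum
        (f := fun t => f t / (L + ε) ^ t)
        (fun t _ => div_nonneg (hf t) (le_of_lt (pow_pos hLε t))) hmem
      linarith
    calc f m = (f m / (L + ε) ^ m) * (L + ε) ^ m := by
          field_simp
      _ ≤ C * (L + ε) ^ m :=
          mul_le_mul_of_nonneg_right this (le_of_lt (pow_pos hLε m))
  · have hm1 : m ≠ 0 := by omega
    have h1 : f m ^ ((1:ℝ)/m) < L + ε := hN m (by omega)
    have : f m ≤ (L + ε) ^ m := by
      have := pow_le_pow_left₀ (grSeq_nonneg hf m) (le_of_lt h1) m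
      rwa [one_div_self_pow _ (hf m) hm1] at this
    calc f m ≤ (L + ε) ^ m := this
      _ ≤ C * (L + ε) ^ m := by nlinarith [pow_pos hLε m]

lemma tendsto_rpow_one_div {c : ℝ} (hc : 0 < c) :
    Tendsto (fun m : ℕ => c ^ ((1 : ℝ) / m)) atTop (𝓝 1) := by
  have h : ∀ m : ℕ, c ^ ((1:ℝ)/m) = Real.exp (Real.log c * (1/m)) := fun m =>
    Real.rpow_def_of_pos hc _
  simp_rw [h]
  have : Tendsto (fun m : ℕ => Real.log c * (1/(m:ℝ))) atTop (𝓝 (Real.log c * 0)) :=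
    Tendsto.const_mul _ tendsto_one_div_atTop_nhds_zero_nat
  rw [mul_zero] at this
  have := (Real.continuous_exp.tendsto 0).comp this
  simpa [Function.comp_def] using this

/-- shift comparison: if c * g m ≤ f (m+k), then gr g ≤ gr f -/
lemma gr_shift {f g : ℕ → ℝ} (hf : ∀ m, 0 ≤ f m) (hg : ∀ m, 0 ≤ g m)
    (hbf : IsBoundedUnder (· ≤ ·) atTop (fun m : ℕ => f m ^ ((1 : ℝ) / m)))
    (hbg : IsBoundedUnder (· ≤ ·) atTop (fun m : ℕ => g m ^ ((1 : ℝ) / m)))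
    {c : ℝ} (hc : 0 < c) (k : ℕ) (h : ∀ m, c * g m ≤ f (m + k)) :
    gr g ≤ gr f := by
  rcases le_or_gt (gr g) 0 with hg0 | hg0
  · exact hg0.trans (gr_nonneg hf hbf)
  by_contra hcon
  push_neg at hcon
  -- pick x with max (gr f) 0 < x < gr g
  set x := (max (gr f) 0 + gr g) / 2 with hx
  have hmax : max (gr f) 0 < gr g := by
    rcases max_cases (gr f) 0 with ⟨he, _⟩ | ⟨he, _⟩ <;> rw [he]
    · exact hcon
    · exact hg0
  have hx1 : max (gr f) 0 < x := by rw [hx]; linarith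
  have hx2 : x < gr g := by rw [hx]; linarith
  have hx0 : 0 < x := lt_of_le_of_lt (le_max_right _ _) hx1
  have hgfx : gr f < x := lt_of_le_of_lt (le_max_left _ _) hx1
  set c₁ := c / x ^ k with hc₁
  have hc₁0 : 0 < c₁ := div_pos hc (pow_pos hx0 k)
  -- frequently g m ^ (1/m) > x
  have hfreq : ∃ᶠ m : ℕ in atTop, x < g m ^ ((1:ℝ)/m) :=
    frequently_lt_of_lt_limsup (cobdd hg) hx2
  -- so frequently f m' ≥ c₁ x^m'
  have hfreq2 : ∃ᶠ m : ℕ in atTop, c₁ * x ^ m ≤ f m := by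
    rw [frequently_atTop] at hfreq ⊢
    intro N
    obtain ⟨m, hm, hxm⟩ := hfreq (N + 1)
    have hm0 : m ≠ 0 := by omega
    have hgm : x ^ m ≤ g m := by
      have := pow_le_pow_left₀ (le_of_lt hx0) (le_of_lt hxm) m
      rwa [one_div_self_pow _ (hg m) hm0] at this
    refine ⟨m + k, by omega, ?_⟩
    have : c * x ^ m ≤ f (m + k) :=
      le_trans (mul_le_mul_of_nonneg_left hgm (le_of_lt hc)) (h m)
    have hpow : c₁ * x ^ (m + k) = c * x ^ m := by
      rw [hc₁, pow_add]
      field_simp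
    linarith [this, hpow.le]
  -- so frequently f^(1/m) ≥ c₁^(1/m) * x, which tends to x > gr f. contradiction
  set y := (gr f + x) / 2 with hy
  have hyx : y < x := by rw [hy]; linarith
  have hygf : gr f < y := by rw [hy]; linarith
  have htend : Tendsto (fun m : ℕ => c₁ ^ ((1:ℝ)/m) * x) atTop (𝓝 (1 * x)) :=
    Tendsto.mul_const x (tendsto_rpow_one_div hc₁0)
  rw [one_mul] at htend
  have hev : ∀ᶠ m : ℕ in atTop, y ≤ c₁ ^ ((1:ℝ)/m) * x :=
    Filter.Tendsto.eventually_const_le hyx htend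
  have hfreq3 : ∃ᶠ m : ℕ in atTop, y ≤ f m ^ ((1:ℝ)/m) := by
    apply (hfreq2.and_eventually (hev.and (eventually_ge_atTop 1))).mono
    rintro m ⟨h1, h2, hm1⟩
    refine h2.trans ?_
    calc c₁ ^ ((1:ℝ)/m) * x = (c₁ * x ^ m) ^ ((1:ℝ)/m) := by
          rw [Real.mul_rpow (le_of_lt hc₁0) (by positivity)]
          rw [pow_one_div_self x (le_of_lt hx0) (by omega : m ≠ 0)]
      _ ≤ f m ^ ((1:ℝ)/m) := Real.rpow_le_rpow (by positivity) h1 (by positivity)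
  have : y ≤ gr f := le_limsup_of_frequently_le hfreq3 hbf
  linarith

end Stmt7Aux

section
/-! ### Matrix preliminaries -/

noncomputable def resM {n : ℕ} (P : Matrix (Fin n) (Fin n) ℝ) (S : Set (Fin n)) :
    Matrix (Fin n) (Fin n) ℝ :=
  fun a b => if a ∈ S ∧ b ∈ S then P a b else 0

section MatrixBasics

variable {n : ℕ} {P A B X Y : Matrix (Fin n) (Fin n) ℝ}

def NN {n : ℕ} (A : Matrix (Fin n) (Fin n) ℝ) : Prop := ∀ i j, 0 ≤ A i j

lemma NN.mul (hA : NN A) (hB : NN B) : NN (A * B) := fun i j => by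
  rw [Matrix.mul_apply]
  exact Finset.sum_nonneg fun k _ => mul_nonneg (hA i k) (hB k j)

lemma NN.one : NN (1 : Matrix (Fin n) (Fin n) ℝ) := fun i j => by
  rw [Matrix.one_apply]; positivity

lemma NN.pow (hA : NN A) (m : ℕ) : NN (A ^ m) := by
  induction m with
  | zero => simpa using NN.one
  | succ m ih => rw [pow_succ]; exact ih.mul hA

lemma NN.res (hP : NN P) (S : Set (Fin n)) : NN (resM P S) := fun i j => by
  unfold resM; split
  · exact hP i j
  · exact le_refl _

lemma resM_le (hP : NN P) (S : Set (Fin n)) (i j : Fin n) : resM P S i j ≤ P i j := by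
  unfold resM; split
  · exact le_refl _
  · exact hP i j

lemma entry_abs_le_norm (A : Matrix (Fin n) (Fin n) ℝ) (i j : Fin n) : ‖A i j‖ ≤ ‖A‖ := by
  have h1 : ‖A i j‖₊ ≤ ‖A‖₊ := by
    rw [Matrix.linfty_opNNNorm_def]
    exact le_trans
      (Finset.single_le_sum (f := fun k => ‖A i k‖₊) (fun _ _ => zero_le)
        (Finset.mem_univ j))
      (Finset.le_sup (f := fun r => ∑ k, ‖A r k‖₊) (Finset.mem_univ i))
  exact_mod_cast h1

lemma entry_le_norm (hA : NN A) (i j : Fin n) : A i j ≤ ‖A‖ :=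
  le_trans (le_abs_self _) (by rw [← Real.norm_eq_abs]; exact entry_abs_le_norm A i j)

lemma norm_le_sum (A : Matrix (Fin n) (Fin n) ℝ) : ‖A‖ ≤ ∑ i, ∑ j, ‖A i j‖ := by
  have h1 : ‖A‖₊ ≤ ∑ i, ∑ j, ‖A i j‖₊ := by
    rw [Matrix.linfty_opNNNorm_def]
    apply Finset.sup_le
    intro i _
    exact Finset.single_le_sum (f := fun i => ∑ j, ‖A i j‖₊) (fun _ _ => zero_le)
      (Finset.mem_univ i)
  have := (NNReal.coe_le_coe).mpr h1
  push_cast at this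
  exact_mod_cast this

lemma norm_mono (hX : NN X) (h : ∀ i j, X i j ≤ Y i j) : ‖X‖ ≤ ‖Y‖ := by
  have h1 : ‖X‖₊ ≤ ‖Y‖₊ := by
    rw [Matrix.linfty_opNNNorm_def, Matrix.linfty_opNNNorm_def]
    apply Finset.sup_mono_fun
    intro i _
    apply Finset.sum_le_sum
    intro j _
    have : |X i j| ≤ |Y i j| := by
      rw [abs_of_nonneg (hX i j), abs_of_nonneg ((hX i j).trans (h i j))]
      exact h i j
    rw [← NNReal.coe_le_coe]
    simpa [Real.norm_eq_abs] using this
  exact_mod_cast h1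

lemma pow_entry_mono (hX : NN X) (h : ∀ i j, X i j ≤ Y i j) (m : ℕ) :
    ∀ i j, (X ^ m) i j ≤ (Y ^ m) i j := by
  induction m with
  | zero => intro i j; simp
  | succ m ih =>
      intro i j
      rw [pow_succ, pow_succ, Matrix.mul_apply, Matrix.mul_apply]
      apply Finset.sum_le_sum
      intro k _
      exact mul_le_mul (ih i k) (h k j) (hX k j) (((hX.pow m) i k).trans (ih i k))

lemma pow_entry_prod_le (hA : NN A) (p q : ℕ) (i k j : Fin n) :
    (A ^ p) i k * (A ^ q) k j ≤ (A ^ (p + q)) i j := by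
  rw [pow_add, Matrix.mul_apply]
  exact Finset.single_le_sum
    (f := fun t => (A ^ p) i t * (A ^ q) t j)
    (fun t _ => mul_nonneg ((hA.pow p) i t) ((hA.pow q) t j)) (Finset.mem_univ k)

lemma sum_pos_exists {ι : Type*} {s : Finset ι} {f : ι → ℝ} (hf : ∀ i ∈ s, 0 ≤ f i)
    (h : 0 < ∑ i ∈ s, f i) : ∃ i ∈ s, 0 < f i := by
  by_contra hc
  push_neg at hc
  have : ∑ i ∈ s, f i ≤ 0 := Finset.sum_nonpos fun i hi => hc i hi
  linarith

/-- norm of powers grows at most geometrically -/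
lemma norm_pow_bound (A : Matrix (Fin n) (Fin n) ℝ) (m : ℕ) :
    ‖A ^ m‖ ≤ (1 + ‖(1 : Matrix (Fin n) (Fin n) ℝ)‖) * (1 + ‖A‖) ^ m := by
  induction m with
  | zero =>
      rw [pow_zero, pow_zero, mul_one]
      linarith [norm_nonneg (1 : Matrix (Fin n) (Fin n) ℝ)]
  | succ m ih =>
      calc ‖A ^ (m+1)‖ = ‖A ^ m * A‖ := by rw [pow_succ]
        _ ≤ ‖A ^ m‖ * ‖A‖ := Matrix.linfty_opNorm_mul _ _
        _ ≤ ((1 + ‖(1 : Matrix (Fin n) (Fin n) ℝ)‖) * (1 + ‖A‖) ^ m) * (1 + ‖A‖) := by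
            apply mul_le_mul ih (by linarith [norm_nonneg A]) (norm_nonneg A)
            positivity
        _ = (1 + ‖(1 : Matrix (Fin n) (Fin n) ℝ)‖) * (1 + ‖A‖) ^ (m+1) := by ring

lemma bdd_norm_pow (A : Matrix (Fin n) (Fin n) ℝ) :
    IsBoundedUnder (· ≤ ·) atTop (fun m : ℕ => ‖A ^ m‖ ^ ((1 : ℝ) / m)) :=
  Stmt7Aux.bdd (fun m => norm_nonneg _) (by positivity) (norm_pow_bound A)

lemma rho_nonneg (A : Matrix (Fin n) (Fin n) ℝ) : 0 ≤ rho A :=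
  Stmt7Aux.gr_nonneg (fun m => norm_nonneg _) (bdd_norm_pow A)

/-! ### Graph lemmas -/

lemma access_of_entry_pos (hP : NN P) :
    ∀ (m : ℕ) (i j : Fin n), 0 < (P ^ m) i j → Access P i j := by
  intro m
  induction m with
  | zero =>
      intro i j h
      rw [pow_zero, Matrix.one_apply] at h
      split at h
      · subst ‹i = j›; exact Relation.ReflTransGen.refl
      · exact absurd h (lt_irrefl 0)
  | succ m ih =>
      intro i j h
      rw [pow_succ', Matrix.mul_apply] at h
      obtain ⟨k, _, hk⟩ := sum_pos_exists
        (fun k _ => mul_nonneg (hP i k) ((hP.pow m) k j)) h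
      have h1 : 0 < P i k := by
        rcases (mul_pos_iff.mp hk) with ⟨h1, _⟩ | ⟨h1, h2⟩
        · exact h1
        · exact absurd h2 (not_lt.mpr ((hP.pow m) k j))
      have h2 : 0 < (P ^ m) k j := by
        rcases (mul_pos_iff.mp hk) with ⟨_, h2⟩ | ⟨h1, _⟩
        · exact h2
        · exact absurd h1 (not_lt.mpr (hP i k))
      exact Relation.ReflTransGen.head h1 (ih k j h2)

lemma exists_pow_entry_pos (hP : NN P) {i j : Fin n} (h : Access P i j) :
    ∃ m : ℕ, 0 < (P ^ m) i j := by
  unfold Access at h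
  induction h using Relation.ReflTransGen.head_induction_on with
  | refl => exact ⟨0, by simp⟩
  | head hab _ ih =>
      obtain ⟨m, hm⟩ := ih
      refine ⟨1 + m, ?_⟩
      calc (0:ℝ) < P _ _ * (P ^ m) _ j := mul_pos hab hm
        _ = (P ^ 1) _ _ * (P ^ m) _ j := by rw [pow_one]
        _ ≤ (P ^ (1 + m)) _ j := pow_entry_prod_le hP 1 m _ _ _

end MatrixBasics

section GraphRestrict

variable {n : ℕ} {P : Matrix (Fin n) (Fin n) ℝ} {S : Set (Fin n)}

lemma edge_res {a b : Fin n} (h : 0 < resM P S a b) : 0 < P a b ∧ a ∈ S ∧ b ∈ S := by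
  unfold resM at h
  split at h
  · exact ⟨h, ‹_›⟩
  · exact absurd h (lt_irrefl 0)

lemma res_pow_zero_left {a : Fin n} (ha : a ∉ S) {m : ℕ} (hm : m ≠ 0) (b : Fin n) :
    ((resM P S) ^ m) a b = 0 := by
  obtain ⟨m', rfl⟩ := Nat.exists_eq_succ_of_ne_zero hm
  rw [pow_succ', Matrix.mul_apply]
  apply Finset.sum_eq_zero
  intro k _
  have : resM P S a k = 0 := by unfold resM; rw [if_neg]; tauto
  rw [this, zero_mul]

lemma res_pow_zero_right {b : Fin n} (hb : b ∉ S) {m : ℕ} (hm : m ≠ 0) (a : Fin n) :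
    ((resM P S) ^ m) a b = 0 := by
  obtain ⟨m', rfl⟩ := Nat.exists_eq_succ_of_ne_zero hm
  rw [pow_succ, Matrix.mul_apply]
  apply Finset.sum_eq_zero
  intro k _
  have : resM P S k b = 0 := by unfold resM; rw [if_neg]; tauto
  rw [this, mul_zero]

/-- paths from `a` to `j` with `a` between `i` and `j` stay between `i` and `j` -/
lemma res_pow_entry_eq (hP : NN P) (i j : Fin n) :
    ∀ (m : ℕ) (a : Fin n), Access P i a → Access P a j →
      (P ^ m) a j = ((resM P {v | Access P i v ∧ Access P v j}) ^ m) a j := by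
  set S : Set (Fin n) := {v | Access P i v ∧ Access P v j} with hS
  set Q := resM P S with hQ
  have hQle : ∀ x y, Q x y ≤ P x y := resM_le hP S
  have hQnn : NN Q := hP.res S
  intro m
  induction m with
  | zero => intro a _ _; rw [pow_zero, pow_zero]
  | succ m ih =>
      intro a hia haj
      rw [pow_succ', pow_succ', Matrix.mul_apply, Matrix.mul_apply]
      apply Finset.sum_congr rfl
      intro k _
      by_cases hk : 0 < P a k ∧ 0 < (P ^ m) k j
      · have hik : Access P i k := Relation.ReflTransGen.tail hia hk.1
        have hkj : Access P k j := access_of_entry_pos hP m k j hk.2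
        have haS : a ∈ S := ⟨hia, haj⟩
        have hkS : k ∈ S := ⟨hik, hkj⟩
        have h1 : Q a k = P a k := by rw [hQ]; unfold resM; rw [if_pos ⟨haS, hkS⟩]
        have h2 : (P ^ m) k j = (Q ^ m) k j := ih k hik hkj
        rw [h1, h2]
      · have h0 : P a k * (P ^ m) k j = 0 := by
          rcases not_and_or.mp hk with h | h
          · have : P a k = 0 := le_antisymm (not_lt.mp h) (hP a k)
            rw [this, zero_mul]
          · have : (P ^ m) k j = 0 := le_antisymm (not_lt.mp h) ((hP.pow m) k j)
            rw [this, mul_zero]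
        rw [h0]
        symm
        have hle : Q a k * (Q ^ m) k j ≤ P a k * (P ^ m) k j :=
          mul_le_mul (hQle a k) (pow_entry_mono hQnn hQle m k j) ((hQnn.pow m) k j)
            (hP a k)
        have hge : 0 ≤ Q a k * (Q ^ m) k j := mul_nonneg (hQnn a k) ((hQnn.pow m) k j)
        rw [h0] at hle
        linarith

def ConvS {n : ℕ} (P : Matrix (Fin n) (Fin n) ℝ) (S : Set (Fin n)) : Prop :=
  ∀ a v b, a ∈ S → b ∈ S → Access P a v → Access P v b → v ∈ S

lemma conv_between (P : Matrix (Fin n) (Fin n) ℝ) (i j : Fin n) :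
    ConvS P {v | Access P i v ∧ Access P v j} := by
  rintro a v b ⟨hia, _⟩ ⟨_, hbj⟩ hav hvb
  exact ⟨hia.trans hav, hvb.trans hbj⟩

lemma access_of_access_res {a b : Fin n} (h : Access (resM P S) a b) : Access P a b :=
  by
    unfold Access at h ⊢
    induction h with
    | refl => exact Relation.ReflTransGen.refl
    | tail _ hbc ih => exact ih.tail (edge_res hbc).1

lemma access_res_of_access (hS : ConvS P S) {a b : Fin n}
    (hb : b ∈ S) (h : Access P a b) : a ∈ S → Access (resM P S) a b := by
  unfold Access at h ⊢
  induction h using Relation.ReflTransGen.head_induction_on with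
  | refl => intro _; exact Relation.ReflTransGen.refl
  | head h' hrest ih =>
      intro ha
      rename_i x y
      have hyS : y ∈ S := hS x y b ha hb (Relation.ReflTransGen.single h') hrest
      have hedge : 0 < resM P S x y := by
        unfold resM; rw [if_pos ⟨ha, hyS⟩]; exact h'
      exact Relation.ReflTransGen.head hedge (ih hyS)

def classS {n : ℕ} (P : Matrix (Fin n) (Fin n) ℝ) (i : Fin n) : Set (Fin n) :=
  {a | Access P i a ∧ Access P a i}

lemma classMatrix_eq_res (P : Matrix (Fin n) (Fin n) ℝ) (i : Fin n) :
    classMatrix P i = resM P (classS P i) := by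
  funext a b
  unfold classMatrix resM classS
  simp only [Set.mem_setOf_eq]

lemma classS_conv (P : Matrix (Fin n) (Fin n) ℝ) (i : Fin n) : ConvS P (classS P i) := by
  rintro a v b ⟨hia, hai⟩ ⟨hib, hbi⟩ hav hvb
  exact ⟨hia.trans hav, (hvb.trans hbi)⟩

lemma classS_subset_of_conv {i : Fin n} (hS : ConvS P S) (hi : i ∈ S) :
    classS P i ⊆ S := by
  rintro a ⟨hia, hai⟩
  exact hS i a i hi hi hia hai

end GraphRestrict

section Block

variable {n : ℕ} {A B D : Matrix (Fin n) (Fin n) ℝ}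

lemma pow_succ_mul_eq_zero (h : A * B = 0) (k : ℕ) : A ^ (k + 1) * B = 0 := by
  rw [pow_succ, mul_assoc, h, mul_zero]

lemma blockPow (hAD : A * D = 0) (hDA : D * A = 0) (hDB : D * B = 0)
    (hBA : B * A = 0) (hBB : B * B = 0) (m : ℕ) :
    (A + B + D) ^ (m + 1) =
      A ^ (m + 1) + D ^ (m + 1) +
        ∑ p ∈ Finset.range (m + 1), A ^ p * B * (D ^ (m - p)) := by
  have hBDA : ∀ q : ℕ, B * (D ^ q * A) = 0 := by
    intro q
    cases q with
    | zero => rw [pow_zero, one_mul, hBA]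
    | succ k => rw [pow_succ_mul_eq_zero hDA k, mul_zero]
  have hBDB : ∀ q : ℕ, B * (D ^ q * B) = 0 := by
    intro q
    cases q with
    | zero => rw [pow_zero, one_mul, hBB]
    | succ k => rw [pow_succ_mul_eq_zero hDB k, mul_zero]
  induction m with
  | zero =>
      simp only [zero_add, pow_one, Finset.sum_range_one, pow_zero, Nat.zero_sub,
        one_mul, mul_one]
      abel
  | succ m ih =>
      have expand : (A + B + D) ^ (m + 1 + 1) = (A + B + D) ^ (m + 1) * (A + B + D) :=
        pow_succ _ _
      rw [expand, ih]
      rw [add_mul, add_mul, mul_add, mul_add, mul_add, mul_add, mul_add, mul_add,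
        Finset.sum_mul, Finset.sum_mul, Finset.sum_mul]
      have e1 : A ^ (m + 1) * D = 0 := pow_succ_mul_eq_zero hAD m
      have e2 : D ^ (m + 1) * A = 0 := pow_succ_mul_eq_zero hDA m
      have e3 : D ^ (m + 1) * B = 0 := pow_succ_mul_eq_zero hDB m
      have e4 : ∀ p ∈ Finset.range (m + 1), A ^ p * B * D ^ (m - p) * A = 0 := by
        intro p _
        rw [mul_assoc, mul_assoc, hBDA, mul_zero]
      have e5 : ∀ p ∈ Finset.range (m + 1), A ^ p * B * D ^ (m - p) * B = 0 := by
        intro p _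
        rw [mul_assoc, mul_assoc, hBDB, mul_zero]
      rw [e1, Finset.sum_congr rfl e4, Finset.sum_congr rfl e5, e2, e3]
      simp only [Finset.sum_const_zero, add_zero, zero_add]
      have e6 : ∑ p ∈ Finset.range (m + 1), A ^ p * B * D ^ (m - p) * D =
          ∑ p ∈ Finset.range (m + 1), A ^ p * B * D ^ (m + 1 - p) := by
        apply Finset.sum_congr rfl
        intro p hp
        have hpm : p ≤ m := Nat.lt_succ_iff.mp (Finset.mem_range.mp hp)
        rw [mul_assoc, mul_assoc, ← pow_succ]
        have : m - p + 1 = m + 1 - p := by omega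
        rw [this, ← mul_assoc]
      rw [e6]
      have e7 : ∑ p ∈ Finset.range (m + 1 + 1), A ^ p * B * D ^ (m + 1 - p) =
          (∑ p ∈ Finset.range (m + 1), A ^ p * B * D ^ (m + 1 - p)) +
            A ^ (m + 1) * B * D ^ 0 := by
        have hmm : m + 1 - (m + 1) = 0 := by omega
        rw [Finset.sum_range_succ, hmm]
      rw [e7, pow_zero, mul_one]
      rw [← pow_succ, ← pow_succ]
      abel

lemma rho_eq_gr (A : Matrix (Fin n) (Fin n) ℝ) :
    rho A = Stmt7Aux.gr (fun m => ‖A ^ m‖) := rfl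

lemma rho_block (hAD : A * D = 0) (hDA : D * A = 0) (hDB : D * B = 0)
    (hBA : B * A = 0) (hBB : B * B = 0) :
    rho (A + B + D) ≤ max (rho A) (rho D) := by
  set r := max (rho A) (rho D) with hr
  have hr0 : 0 ≤ r := le_trans (rho_nonneg A) (le_max_left _ _)
  rw [rho_eq_gr]
  apply Stmt7Aux.gr_le (fun m => norm_nonneg _) hr0
  intro ε hε
  have hrε : 0 < r + ε := by linarith
  obtain ⟨CA, hCA, hCAb⟩ := Stmt7Aux.gr_ev (f := fun m => ‖A ^ m‖)
    (fun m => norm_nonneg _) (bdd_norm_pow A) hr0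
    (by rw [← rho_eq_gr]; exact le_max_left _ _) ε hε
  obtain ⟨CD, hCD, hCDb⟩ := Stmt7Aux.gr_ev (f := fun m => ‖D ^ m‖)
    (fun m => norm_nonneg _) (bdd_norm_pow D) hr0
    (by rw [← rho_eq_gr]; exact le_max_right _ _) ε hε
  set c2 := CA * CD * ‖B‖ / (r + ε) with hc2
  have hc20 : 0 ≤ c2 := by
    apply div_nonneg _ (le_of_lt hrε)
    positivity
  refine ⟨‖(1 : Matrix (Fin n) (Fin n) ℝ)‖ + CA + CD + c2 + 1, by positivity, fun m => ?_⟩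
  set C := ‖(1 : Matrix (Fin n) (Fin n) ℝ)‖ + CA + CD + c2 + 1 with hC
  cases m with
  | zero =>
      simp only [pow_zero, Nat.cast_zero, zero_add, mul_one]
      rw [hC]
      have := norm_nonneg (1 : Matrix (Fin n) (Fin n) ℝ)
      linarith
  | succ m =>
      have hQ := blockPow hAD hDA hDB hBA hBB m
      have hsum : ‖∑ p ∈ Finset.range (m + 1), A ^ p * B * (D ^ (m - p))‖ ≤
          ((m:ℝ) + 1) * (CA * CD * ‖B‖ * (r + ε) ^ m) := by
        calc ‖∑ p ∈ Finset.range (m + 1), A ^ p * B * (D ^ (m - p))‖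
              ≤ ∑ p ∈ Finset.range (m + 1), ‖A ^ p * B * (D ^ (m - p))‖ :=
                norm_sum_le _ _
          _ ≤ ∑ p ∈ Finset.range (m + 1), CA * CD * ‖B‖ * (r + ε) ^ m := by
              apply Finset.sum_le_sum
              intro p hp
              have hpm : p ≤ m := Nat.lt_succ_iff.mp (Finset.mem_range.mp hp)
              calc ‖A ^ p * B * (D ^ (m - p))‖
                  ≤ ‖A ^ p * B‖ * ‖D ^ (m - p)‖ := Matrix.linfty_opNorm_mul _ _
                _ ≤ (‖A ^ p‖ * ‖B‖) * ‖D ^ (m - p)‖ :=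
                    mul_le_mul_of_nonneg_right (Matrix.linfty_opNorm_mul _ _)
                      (norm_nonneg _)
                _ ≤ (CA * (r + ε) ^ p * ‖B‖) * (CD * (r + ε) ^ (m - p)) := by
                    apply mul_le_mul
                    · exact mul_le_mul_of_nonneg_right (hCAb p) (norm_nonneg _)
                    · exact hCDb (m - p)
                    · exact norm_nonneg _
                    · positivity
                _ = CA * CD * ‖B‖ * ((r + ε) ^ p * (r + ε) ^ (m - p)) := by ring
                _ = CA * CD * ‖B‖ * (r + ε) ^ m := by
                    rw [← pow_add]
                    have : p + (m - p) = m := by omega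
                    rw [this]
          _ = ((m:ℝ) + 1) * (CA * CD * ‖B‖ * (r + ε) ^ m) := by
              rw [Finset.sum_const, Finset.card_range]
              push_cast
              ring
      have h1 : (0:ℝ) ≤ (r + ε) ^ (m + 1) := le_of_lt (pow_pos hrε _)
      have hone := norm_nonneg (1 : Matrix (Fin n) (Fin n) ℝ)
      have hterm : ((m:ℝ) + 1) * (CA * CD * ‖B‖ * (r + ε) ^ m) =
          ((m:ℝ) + 1) * (c2 * (r + ε) ^ (m + 1)) := by
        rw [hc2]
        field_simp
        ring
      have key : CA + CD + ((m:ℝ) + 1) * c2 ≤ C * ((m:ℝ) + 1 + 1) := by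
        have h2 : (m:ℝ) * c2 ≤ (m:ℝ) * C := by
          apply mul_le_mul_of_nonneg_left _ (by positivity)
          rw [hC]; linarith
        have h3 : c2 ≤ C := by rw [hC]; linarith
        have h4 : CA + CD + c2 ≤ C := by rw [hC]; linarith
        have h5 : 0 < C := by rw [hC]; linarith
        nlinarith
      calc ‖(A + B + D) ^ (m + 1)‖
          ≤ ‖A ^ (m + 1)‖ + ‖D ^ (m + 1)‖ +
              ‖∑ p ∈ Finset.range (m + 1), A ^ p * B * (D ^ (m - p))‖ := by
            rw [hQ]
            exact le_trans (norm_add_le _ _)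
              (add_le_add_left (norm_add_le _ _) _)
        _ ≤ CA * (r + ε) ^ (m + 1) + CD * (r + ε) ^ (m + 1) +
              ((m:ℝ) + 1) * (c2 * (r + ε) ^ (m + 1)) := by
            rw [← hterm]
            exact add_le_add (add_le_add (hCAb (m+1)) (hCDb (m+1))) hsum
        _ = (CA + CD + ((m:ℝ) + 1) * c2) * (r + ε) ^ (m + 1) := by ring
        _ ≤ (C * ((m:ℝ) + 1 + 1)) * (r + ε) ^ (m + 1) :=
            mul_le_mul_of_nonneg_right key h1
        _ = C * ((m + 1 : ℕ) + 1) * (r + ε) ^ (m + 1) := by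
            push_cast
            ring
  
end Block

section MainInduction

variable {n : ℕ} {P : Matrix (Fin n) (Fin n) ℝ}

noncomputable def resM2 {n : ℕ} (P : Matrix (Fin n) (Fin n) ℝ) (U V : Set (Fin n)) :
    Matrix (Fin n) (Fin n) ℝ :=
  fun a c => if a ∈ U ∧ c ∈ V then P a c else 0

lemma bddAbove_aux (f : Fin n → ℝ) {T : Set ℝ} (hT : T ⊆ {0} ∪ Set.range f) :
    BddAbove T :=
  (((Set.finite_singleton 0).union (Set.finite_range f)).bddAbove).mono hT

lemma classSet_sub (S : Set (Fin n)) :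
    ({0} ∪ {r | ∃ i ∈ S, r = rho (classMatrix P i)} : Set ℝ) ⊆
      {0} ∪ Set.range (fun i => rho (classMatrix P i)) := by
  rintro r (hr | ⟨i, _, rfl⟩)
  · exact Or.inl hr
  · exact Or.inr ⟨i, rfl⟩

lemma rho_le_zero_of_zero : rho (0 : Matrix (Fin n) (Fin n) ℝ) ≤ 0 := by
  rw [rho_eq_gr]
  apply Stmt7Aux.gr_le (fun m => norm_nonneg _) le_rfl
  intro ε hε
  refine ⟨‖(1 : Matrix (Fin n) (Fin n) ℝ)‖ + 1, by positivity, fun m => ?_⟩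
  cases m with
  | zero =>
      simp only [pow_zero, Nat.cast_zero, zero_add, mul_one, zero_add]
      nlinarith [norm_nonneg (1 : Matrix (Fin n) (Fin n) ℝ)]
  | succ m =>
      rw [zero_pow (Nat.succ_ne_zero m), norm_zero]
      have h1 : (0:ℝ) < (0 + ε) ^ (m+1) := by
        rw [zero_add]; exact pow_pos hε _
      have h2 : (0:ℝ) ≤ ((m+1:ℕ):ℝ) + 1 := by positivity
      have h3 : (0:ℝ) ≤ ‖(1 : Matrix (Fin n) (Fin n) ℝ)‖ + 1 := by positivity
      exact mul_nonneg (mul_nonneg h3 h2) (le_of_lt h1)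

lemma mul_eq_zero_support {X Y : Matrix (Fin n) (Fin n) ℝ} {U V : Set (Fin n)}
    (hX : ∀ a b, b ∉ U → X a b = 0) (hY : ∀ b c, b ∉ V → Y b c = 0)
    (hUV : ∀ x, x ∈ U → x ∉ V) : X * Y = 0 := by
  ext a c
  rw [Matrix.mul_apply]
  apply Finset.sum_eq_zero
  intro k _
  by_cases hk : k ∈ U
  · rw [hY k c (hUV k hk), mul_zero]
  · rw [hX a k hk, zero_mul]

/-- The main induction: spectral radius of a restriction to a convex set is bounded by
the class spectral radii inside it. -/
lemma ub (hP : NN P) : ∀ (N : ℕ) (S : Set (Fin n)), S.ncard ≤ N → ConvS P S →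
    rho (resM P S) ≤ sSup ({0} ∪ {r | ∃ i ∈ S, r = rho (classMatrix P i)}) := by
  intro N
  induction N with
  | zero =>
      intro S hcard _
      have hS : S = ∅ := (Set.ncard_eq_zero S.toFinite).mp (Nat.le_zero.mp hcard)
      subst hS
      have hres : resM P (∅ : Set (Fin n)) = 0 := by
        ext a c; unfold resM; simp
      rw [hres]
      refine le_trans rho_le_zero_of_zero ?_
      apply le_csSup (bddAbove_aux (fun i => rho (classMatrix P i)) (classSet_sub _))
      exact Or.inl rfl
  | succ N ih =>
      intro S hcard hconv
      rcases S.eq_empty_or_nonempty with rfl | hne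
      · have hres : resM P (∅ : Set (Fin n)) = 0 := by
          ext a c; unfold resM; simp
        rw [hres]
        refine le_trans rho_le_zero_of_zero ?_
        apply le_csSup (bddAbove_aux (fun i => rho (classMatrix P i)) (classSet_sub _))
        exact Or.inl rfl
      set Q := resM P S with hQdef
      -- pick a sink vertex
      set F : Fin n → Finset (Fin n) := fun a => Finset.univ.filter (fun v => Access Q a v)
        with hF
      obtain ⟨i₀, hi₀mem, hmin⟩ :=
        Finset.exists_min_image S.toFinite.toFinset (fun a => (F a).card)
          ((Set.Finite.toFinset_nonempty _).mpr hne)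
      have hi₀S : i₀ ∈ S := (Set.Finite.mem_toFinset _).mp hi₀mem
      have hsinkQ : ∀ c ∈ S, Access Q i₀ c → Access Q c i₀ := by
        intro c hc hic
        have h1 : F c ⊆ F i₀ := by
          intro v hv
          rw [hF, Finset.mem_filter] at hv ⊢
          exact ⟨Finset.mem_univ v, hic.trans hv.2⟩
        have h2 : (F i₀).card ≤ (F c).card := hmin c ((Set.Finite.mem_toFinset _).mpr hc)
        have h3 : F c = F i₀ := Finset.eq_of_subset_of_card_le h1 h2
        have h4 : i₀ ∈ F i₀ := by
          rw [hF, Finset.mem_filter]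
          exact ⟨Finset.mem_univ i₀, Relation.ReflTransGen.refl⟩
        rw [← h3, hF, Finset.mem_filter] at h4
        exact h4.2
      set T := classS P i₀ with hT
      have hi₀T : i₀ ∈ T := ⟨Relation.ReflTransGen.refl, Relation.ReflTransGen.refl⟩
      have hTsub : T ⊆ S := classS_subset_of_conv hconv hi₀S
      set S' := S \ T with hS'
      -- sink property in terms of P
      have hsink : ∀ a ∈ T, ∀ c, 0 < P a c → c ∈ S → c ∈ T := by
        intro a haT c hPac hcS
        have haS : a ∈ S := hTsub haT
        have hQia : Access Q i₀ a :=
          access_res_of_access hconv haS haT.1 hi₀S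
        have hedge : 0 < Q a c := by
          rw [hQdef]; unfold resM; rw [if_pos ⟨haS, hcS⟩]; exact hPac
        have hQic : Access Q i₀ c := hQia.tail hedge
        have hQci : Access Q c i₀ := hsinkQ c hcS hQic
        exact ⟨access_of_access_res hQic, access_of_access_res hQci⟩
      set Amat := resM P S' with hA
      set Dmat := resM P T with hD
      set Bmat : Matrix (Fin n) (Fin n) ℝ := resM2 P S' T with hB
      -- decomposition
      have hdecomp : Q = Amat + Bmat + Dmat := by
        ext a c
        show Q a c = Amat a c + Bmat a c + Dmat a c
        rw [hQdef, hA, hB, hD]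
        unfold resM resM2
        by_cases haS : a ∈ S
        · by_cases hcS : c ∈ S
          · by_cases haT : a ∈ T
            · by_cases hcT : c ∈ T
              · rw [if_pos ⟨haS, hcS⟩, if_neg (fun h : a ∈ S' ∧ c ∈ S' => h.1.2 haT),
                  if_neg (fun h : a ∈ S' ∧ c ∈ T => h.1.2 haT), if_pos ⟨haT, hcT⟩]
                ring
              · have hP0 : P a c = 0 := by
                  by_contra hne'
                  have hpos : 0 < P a c := lt_of_le_of_ne (hP a c) (Ne.symm hne')
                  exact hcT (hsink a haT c hpos hcS)
                rw [if_pos ⟨haS, hcS⟩, if_neg (fun h : a ∈ S' ∧ c ∈ S' => h.1.2 haT),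
                  if_neg (fun h : a ∈ S' ∧ c ∈ T => h.1.2 haT),
                  if_neg (fun h : a ∈ T ∧ c ∈ T => hcT h.2), hP0]
                ring
            · by_cases hcT : c ∈ T
              · rw [if_pos ⟨haS, hcS⟩, if_neg (fun h : a ∈ S' ∧ c ∈ S' => h.2.2 hcT),
                  if_pos (⟨⟨haS, haT⟩, hcT⟩ : a ∈ S' ∧ c ∈ T),
                  if_neg (fun h : a ∈ T ∧ c ∈ T => haT h.1)]
                ring
              · rw [if_pos ⟨haS, hcS⟩, if_pos (⟨⟨haS, haT⟩, ⟨hcS, hcT⟩⟩ : a ∈ S' ∧ c ∈ S'),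
                  if_neg (fun h : a ∈ S' ∧ c ∈ T => hcT h.2),
                  if_neg (fun h : a ∈ T ∧ c ∈ T => haT h.1)]
                ring
          · rw [if_neg (fun h : a ∈ S ∧ c ∈ S => hcS h.2),
              if_neg (fun h : a ∈ S' ∧ c ∈ S' => hcS h.2.1),
              if_neg (fun h : a ∈ S' ∧ c ∈ T => hcS (hTsub h.2)),
              if_neg (fun h : a ∈ T ∧ c ∈ T => hcS (hTsub h.2))]
            ring
        · rw [if_neg (fun h : a ∈ S ∧ c ∈ S => haS h.1),
            if_neg (fun h : a ∈ S' ∧ c ∈ S' => haS h.1.1),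
            if_neg (fun h : a ∈ S' ∧ c ∈ T => haS h.1.1),
            if_neg (fun h : a ∈ T ∧ c ∈ T => haS (hTsub h.1))]
          ring
      -- support facts
      have hAcol : ∀ a b, b ∉ S' → Amat a b = 0 := by
        intro a b hb
        rw [hA]; unfold resM; exact if_neg (fun h => hb h.2)
      have hArow : ∀ a b, a ∉ S' → Amat a b = 0 := by
        intro a b ha
        rw [hA]; unfold resM; exact if_neg (fun h => ha h.1)
      have hDcol : ∀ a b, b ∉ T → Dmat a b = 0 := by
        intro a b hb
        rw [hD]; unfold resM; exact if_neg (fun h => hb h.2)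
      have hDrow : ∀ a b, a ∉ T → Dmat a b = 0 := by
        intro a b ha
        rw [hD]; unfold resM; exact if_neg (fun h => ha h.1)
      have hBcol : ∀ a b, b ∉ T → Bmat a b = 0 := by
        intro a b hb
        rw [hB]; unfold resM2; exact if_neg (fun h => hb h.2)
      have hBrow : ∀ a b, a ∉ S' → Bmat a b = 0 := by
        intro a b ha
        rw [hB]; unfold resM2; exact if_neg (fun h => ha h.1)
      have hdisj1 : ∀ x : Fin n, x ∈ S' → x ∉ T := fun x hx => hx.2
      have hdisj2 : ∀ x : Fin n, x ∈ T → x ∉ S' := fun x hx h => h.2 hx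
      have hAD : Amat * Dmat = 0 := mul_eq_zero_support hAcol hDrow hdisj1
      have hDA : Dmat * Amat = 0 := mul_eq_zero_support hDcol hArow hdisj2
      have hDB : Dmat * Bmat = 0 := mul_eq_zero_support hDcol hBrow hdisj2
      have hBA : Bmat * Amat = 0 := mul_eq_zero_support hBcol hArow hdisj2
      have hBB : Bmat * Bmat = 0 := mul_eq_zero_support hBcol hBrow hdisj2
      have hblock : rho Q ≤ max (rho Amat) (rho Dmat) := by
        rw [hdecomp]
        exact rho_block hAD hDA hDB hBA hBB
      -- convexity of S'
      have hconv' : ConvS P S' := by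
        rintro a v c ⟨haS, haT⟩ ⟨hcS, hcT⟩ hav hvc
        have hvS : v ∈ S := hconv a v c haS hcS hav hvc
        refine ⟨hvS, fun hvT => ?_⟩
        have hic : Access P i₀ c := hvT.1.trans hvc
        have hQic : Access Q i₀ c := access_res_of_access hconv hcS hic hi₀S
        have hQci : Access Q c i₀ := hsinkQ c hcS hQic
        exact hcT ⟨hic, access_of_access_res hQci⟩
      -- cardinality decrease
      have hcard' : S'.ncard ≤ N := by
        have hssub : S' ⊂ S := by
          constructor
          · exact Set.diff_subset
          · intro hSS
            exact (hSS hi₀S).2 hi₀T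
        have := Set.ncard_lt_ncard hssub S.toFinite
        omega
      -- close using IH and membership
      have hbdd := bddAbove_aux (fun i => rho (classMatrix P i))
        (classSet_sub (P := P) S)
      have hIH : rho Amat ≤ sSup ({0} ∪ {r | ∃ i ∈ S, r = rho (classMatrix P i)}) := by
        refine le_trans (ih S' hcard' hconv') (csSup_le_csSup hbdd ⟨0, Or.inl rfl⟩ ?_)
        rintro r (hr | ⟨i, hiS', rfl⟩)
        · exact Or.inl hr
        · exact Or.inr ⟨i, hiS'.1, rfl⟩
      have hDle : rho Dmat ≤ sSup ({0} ∪ {r | ∃ i ∈ S, r = rho (classMatrix P i)}) := by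
        apply le_csSup hbdd
        refine Or.inr ⟨i₀, hi₀S, ?_⟩
        rw [classMatrix_eq_res, hD]
      exact le_trans hblock (max_le hIH hDle)

end MainInduction

section Final

variable {n : ℕ} {A : Matrix (Fin n) (Fin n) ℝ} {v : Fin n → ℝ}

lemma mulVec_apply' (A : Matrix (Fin n) (Fin n) ℝ) (v : Fin n → ℝ) (a : Fin n) :
    A.mulVec v a = ∑ t, A a t * v t := rfl

lemma mulVec_nonneg (hA : NN A) (hv : ∀ i, 0 ≤ v i) (a : Fin n) : 0 ≤ A.mulVec v a := by
  rw [mulVec_apply']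
  exact Finset.sum_nonneg fun t _ => mul_nonneg (hA a t) (hv t)

lemma mulVec_entry_le (hA : NN A) (hv : ∀ i, 0 ≤ v i) (a t : Fin n) :
    A a t * v t ≤ A.mulVec v a := by
  rw [mulVec_apply']
  exact Finset.single_le_sum (f := fun t => A a t * v t)
    (fun s _ => mul_nonneg (hA a s) (hv s)) (Finset.mem_univ t)

lemma entryVec_le_norm (v : Fin n → ℝ) (a : Fin n) : v a ≤ ‖v‖ :=
  le_trans (le_abs_self _) (by rw [← Real.norm_eq_abs]; exact norm_le_pi_norm v a)

lemma localRho_eq_gr (P : Matrix (Fin n) (Fin n) ℝ) (b : Fin n → ℝ) :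
    localRho P b = Stmt7Aux.gr (fun m => ‖(P ^ m).mulVec b‖) := rfl

theorem stmt7' {n : ℕ} (P : Matrix (Fin n) (Fin n) ℝ) (hP : ∀ i j, 0 ≤ P i j)
    (b : Fin n → ℝ) (hb : ∀ i, 0 ≤ b i) :
    localRho P b =
      sSup ({0} ∪ {r : ℝ | ∃ i : Fin n,
        (∃ j, 0 < b j ∧ Access P i j) ∧ r = rho (classMatrix P i)}) := by
  have hPnn : NN P := hP
  set RSet : Set ℝ := {0} ∪ {r : ℝ | ∃ i : Fin n,
    (∃ j, 0 < b j ∧ Access P i j) ∧ r = rho (classMatrix P i)} with hRSet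
  have hRb : BddAbove RSet := by
    apply bddAbove_aux (fun i => rho (classMatrix P i))
    rintro r (hr | ⟨i, _, rfl⟩)
    · exact Or.inl hr
    · exact Or.inr ⟨i, rfl⟩
  have hRne : RSet.Nonempty := ⟨0, Or.inl rfl⟩
  have hR0 : (0:ℝ) ≤ sSup RSet := le_csSup hRb (Or.inl rfl)
  have hf : ∀ m : ℕ, (0:ℝ) ≤ ‖(P ^ m).mulVec b‖ := fun m => norm_nonneg _
  have hfb : ∀ m : ℕ, ‖(P ^ m).mulVec b‖ ≤
      ((1 + ‖(1 : Matrix (Fin n) (Fin n) ℝ)‖) * ‖b‖) * (1 + ‖P‖) ^ m := by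
    intro m
    calc ‖(P ^ m).mulVec b‖ ≤ ‖P ^ m‖ * ‖b‖ := Matrix.linfty_opNorm_mulVec _ _
      _ ≤ ((1 + ‖(1 : Matrix (Fin n) (Fin n) ℝ)‖) * (1 + ‖P‖) ^ m) * ‖b‖ :=
          mul_le_mul_of_nonneg_right (norm_pow_bound P m) (norm_nonneg b)
      _ = ((1 + ‖(1 : Matrix (Fin n) (Fin n) ℝ)‖) * ‖b‖) * (1 + ‖P‖) ^ m := by ring
  have hbf : IsBoundedUnder (· ≤ ·) atTop
      (fun m : ℕ => ‖(P ^ m).mulVec b‖ ^ ((1:ℝ)/m)) :=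
    Stmt7Aux.bdd hf (by positivity) hfb
  have hloc0 : 0 ≤ localRho P b := Stmt7Aux.gr_nonneg hf hbf
  apply le_antisymm
  · -- upper bound
    rw [localRho_eq_gr]
    apply Stmt7Aux.gr_le hf hR0
    intro ε hε
    have hRe : (0:ℝ) < sSup RSet + ε := by linarith
    have key : ∀ i j : Fin n, ∃ C > (0:ℝ), ∀ m,
        (P ^ m) i j * b j ≤ C * (sSup RSet + ε) ^ m := by
      intro i j
      by_cases hbj : 0 < b j
      · by_cases hacc : Access P i j
        · set S := {v | Access P i v ∧ Access P v j} with hSdef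
          have hrhoS : rho (resM P S) ≤ sSup RSet := by
            refine le_trans (ub hPnn S.ncard S le_rfl (conv_between P i j)) ?_
            apply csSup_le_csSup hRb ⟨0, Or.inl rfl⟩
            rintro r (hr | ⟨i', hi'S, rfl⟩)
            · exact Or.inl hr
            · exact Or.inr ⟨i', ⟨j, hbj, hi'S.2⟩, rfl⟩
          obtain ⟨C, hC, hCb⟩ := Stmt7Aux.gr_ev (f := fun m => ‖(resM P S) ^ m‖)
            (fun m => norm_nonneg _) (bdd_norm_pow _) hR0
            (by rw [← rho_eq_gr]; exact hrhoS) ε hε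
          refine ⟨C * b j + 1, by positivity, fun m => ?_⟩
          have h1 : (P ^ m) i j = ((resM P S) ^ m) i j :=
            res_pow_entry_eq hPnn i j m i Relation.ReflTransGen.refl hacc
          have h2 : ((resM P S) ^ m) i j ≤ ‖(resM P S) ^ m‖ :=
            entry_le_norm ((hPnn.res S).pow m) i j
          calc (P ^ m) i j * b j ≤ (C * (sSup RSet + ε) ^ m) * b j := by
                apply mul_le_mul_of_nonneg_right _ (hb j)
                rw [h1]; exact h2.trans (hCb m)
            _ = (C * b j) * (sSup RSet + ε) ^ m := by ring
            _ ≤ (C * b j + 1) * (sSup RSet + ε) ^ m := by nlinarith [pow_pos hRe m]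
        · refine ⟨1, one_pos, fun m => ?_⟩
          have h0 : (P ^ m) i j = 0 := by
            by_contra hne'
            have hpos : 0 < (P ^ m) i j :=
              lt_of_le_of_ne ((hPnn.pow m) i j) (Ne.symm hne')
            exact hacc (access_of_entry_pos hPnn m i j hpos)
          rw [h0, zero_mul]
          positivity
      · have hbj0 : b j = 0 := le_antisymm (not_lt.mp hbj) (hb j)
        refine ⟨1, one_pos, fun m => ?_⟩
        rw [hbj0, mul_zero]
        positivity
    choose Cf hCf1 hCf2 using key
    have hCtot : (0:ℝ) ≤ ∑ i, ∑ j, Cf i j :=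
      Finset.sum_nonneg fun i _ => Finset.sum_nonneg fun j _ => le_of_lt (hCf1 i j)
    refine ⟨(∑ i, ∑ j, Cf i j) + 1, by linarith, fun m => ?_⟩
    have hrhs : (0:ℝ) ≤ ((∑ i, ∑ j, Cf i j) + 1) * ((m:ℝ) + 1) * (sSup RSet + ε) ^ m := by
      have h1 := pow_pos hRe m
      have hm1 : (0:ℝ) ≤ (m:ℝ) + 1 := by positivity
      exact mul_nonneg (mul_nonneg (by linarith) hm1) (le_of_lt h1)
    rw [pi_norm_le_iff_of_nonneg hrhs]
    intro a
    have hnn : 0 ≤ (P ^ m).mulVec b a := mulVec_nonneg (hPnn.pow m) hb a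
    rw [Real.norm_eq_abs, abs_of_nonneg hnn, mulVec_apply']
    calc ∑ t, (P ^ m) a t * b t ≤ ∑ t, Cf a t * (sSup RSet + ε) ^ m :=
          Finset.sum_le_sum fun t _ => hCf2 a t m
      _ = (∑ t, Cf a t) * (sSup RSet + ε) ^ m := by rw [Finset.sum_mul]
      _ ≤ ((∑ i, ∑ j, Cf i j) + 1) * ((m:ℝ) + 1) * (sSup RSet + ε) ^ m := by
          apply mul_le_mul_of_nonneg_right _ (le_of_lt (pow_pos hRe m))
          have hrow : (∑ t, Cf a t) ≤ ∑ i, ∑ j, Cf i j :=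
            Finset.single_le_sum (f := fun i => ∑ j, Cf i j)
              (fun i _ => Finset.sum_nonneg fun j _ => le_of_lt (hCf1 i j))
              (Finset.mem_univ a)
          have hm1 : (1:ℝ) ≤ (m:ℝ) + 1 := by
            have : (0:ℝ) ≤ (m:ℝ) := Nat.cast_nonneg m
            linarith
          nlinarith
  · -- lower bound
    apply csSup_le hRne
    rintro r (hr | ⟨i, ⟨j, hbj, hij⟩, rfl⟩)
    · rw [Set.mem_singleton_iff] at hr
      rw [hr]
      exact hloc0
    set M := resM P (classS P i) with hM
    have hMnn : NN M := hPnn.res _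
    rw [classMatrix_eq_res, ← hM, rho_eq_gr]
    apply Stmt7Aux.gr_le (fun m => norm_nonneg _) hloc0
    intro ε hε
    have hLe : (0:ℝ) < localRho P b + ε := by linarith
    have key2 : ∀ a c : Fin n, ∃ C > (0:ℝ), ∀ m,
        (M ^ m) a c ≤ C * (localRho P b + ε) ^ m := by
      intro a c
      by_cases hac : a ∈ classS P i ∧ c ∈ classS P i
      · obtain ⟨⟨hia, hai⟩, hic, hci⟩ := hac
        have hcj : Access P c j := hci.trans hij
        obtain ⟨k, hk⟩ := exists_pow_entry_pos hPnn hcj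
        have hδ : 0 < (P ^ k) c j * b j := mul_pos hk hbj
        have hg : ∀ m, 0 ≤ (M ^ m) a c := fun m => (hMnn.pow m) a c
        have hgb : ∀ m, (M ^ m) a c ≤
            (1 + ‖(1 : Matrix (Fin n) (Fin n) ℝ)‖) * (1 + ‖M‖) ^ m := fun m =>
          (entry_le_norm (hMnn.pow m) a c).trans (norm_pow_bound M m)
        have hbg : IsBoundedUnder (· ≤ ·) atTop
            (fun m : ℕ => ((M ^ m) a c) ^ ((1:ℝ)/m)) :=
          Stmt7Aux.bdd hg (by positivity) hgb
        have hshift : ∀ m, ((P ^ k) c j * b j) * (M ^ m) a c ≤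
            ‖(P ^ (m + k)).mulVec b‖ := by
          intro m
          have t1 : (M ^ m) a c ≤ (P ^ m) a c :=
            pow_entry_mono hMnn (resM_le hPnn _) m a c
          have t2 : (P ^ m) a c * (P ^ k) c j ≤ (P ^ (m + k)) a j :=
            pow_entry_prod_le hPnn m k a c j
          have t3 : (P ^ (m + k)) a j * b j ≤ (P ^ (m + k)).mulVec b a :=
            mulVec_entry_le (hPnn.pow (m + k)) hb a j
          have t4 : (P ^ (m + k)).mulVec b a ≤ ‖(P ^ (m + k)).mulVec b‖ :=
            entryVec_le_norm _ a
          have step1 : ((P ^ k) c j * b j) * (M ^ m) a c ≤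
              ((P ^ m) a c * (P ^ k) c j) * b j := by
            have := mul_le_mul_of_nonneg_right t1
              (mul_nonneg (le_of_lt hk) (hb j))
            nlinarith [hg m, hb j, le_of_lt hk, (hPnn.pow m) a c]
          have step2 : ((P ^ m) a c * (P ^ k) c j) * b j ≤ (P ^ (m + k)) a j * b j :=
            mul_le_mul_of_nonneg_right t2 (hb j)
          linarith
        have hgr : Stmt7Aux.gr (fun m => (M ^ m) a c) ≤ localRho P b := by
          rw [localRho_eq_gr]
          exact Stmt7Aux.gr_shift hf hg hbf hbg hδ k hshift
        exact Stmt7Aux.gr_ev hg hbg hloc0 hgr ε hε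
      · refine ⟨1, one_pos, fun m => ?_⟩
        cases m with
        | zero =>
            rw [pow_zero, pow_zero, mul_one]
            rw [Matrix.one_apply]
            split
            · exact le_refl 1
            · exact zero_le_one
        | succ m =>
            have h0 : (M ^ (m + 1)) a c = 0 := by
              rcases not_and_or.mp hac with h | h
              · exact res_pow_zero_left h (Nat.succ_ne_zero m) c
              · exact res_pow_zero_right h (Nat.succ_ne_zero m) a
            rw [h0]
            positivity
    choose C2 hC21 hC22 using key2
    have hCtot : (0:ℝ) ≤ ∑ a, ∑ c, C2 a c :=
      Finset.sum_nonneg fun a _ => Finset.sum_nonneg fun c _ => le_of_lt (hC21 a c)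
    refine ⟨(∑ a, ∑ c, C2 a c) + 1, by linarith, fun m => ?_⟩
    calc ‖M ^ m‖ ≤ ∑ a, ∑ c, ‖(M ^ m) a c‖ := norm_le_sum _
      _ = ∑ a, ∑ c, (M ^ m) a c := by
          apply Finset.sum_congr rfl
          intro a _
          apply Finset.sum_congr rfl
          intro c _
          rw [Real.norm_eq_abs, abs_of_nonneg ((hMnn.pow m) a c)]
      _ ≤ ∑ a, ∑ c, C2 a c * (localRho P b + ε) ^ m :=
          Finset.sum_le_sum fun a _ => Finset.sum_le_sum fun c _ => hC22 a c m
      _ = (∑ a, ∑ c, C2 a c) * (localRho P b + ε) ^ m := by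
          rw [Finset.sum_mul]
          apply Finset.sum_congr rfl
          intro a _
          rw [Finset.sum_mul]
      _ ≤ ((∑ a, ∑ c, C2 a c) + 1) * ((m:ℝ) + 1) * (localRho P b + ε) ^ m := by
          have h1 : (0:ℝ) < (localRho P b + ε) ^ m := pow_pos hLe m
          have hm0 : (0:ℝ) ≤ (m:ℝ) := Nat.cast_nonneg m
          have hkey : (∑ a, ∑ c, C2 a c) ≤ ((∑ a, ∑ c, C2 a c) + 1) * ((m:ℝ) + 1) := by
            nlinarith [mul_nonneg hCtot hm0]
          calc (∑ a, ∑ c, C2 a c) * (localRho P b + ε) ^ m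
              ≤ (((∑ a, ∑ c, C2 a c) + 1) * ((m:ℝ) + 1)) * (localRho P b + ε) ^ m :=
                mul_le_mul_of_nonneg_right hkey (le_of_lt h1)
            _ = ((∑ a, ∑ c, C2 a c) + 1) * ((m:ℝ) + 1) * (localRho P b + ε) ^ m := by
                ring

end Final

end

theorem stmt7 {n : ℕ} (P : Matrix (Fin n) (Fin n) ℝ) (hP : ∀ i j, 0 ≤ P i j)
    (b : Fin n → ℝ) (hb : ∀ i, 0 ≤ b i) :
    localRho P b =
      sSup ({0} ∪ {r : ℝ | ∃ i : Fin n,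
        (∃ j, 0 < b j ∧ Access P i j) ∧ r = rho (classMatrix P i)}) :=
  stmt7' P hP b hb
end

section
/- Let K be a proper cone in ℝⁿ with K ⊆ K* (subpolar), let A be an n×n real matrix with AK ⊆ K, let b ∈ K be nonzero, and let λ > 0. Then the equations (λI - A)x = b with x ∈ K and (Aᵀ - λI)z = b with z ∈ K* cannot both be solvable. -/
open Filter Matrix
open scoped Topology

/-- A proper cone in `ℝⁿ`: closed, convex, pointed, with nonempty interior. -/
structure IsProperCone {n : ℕ} (K : Set (Fin n → ℝ)) : Prop where
  convex : Convex ℝ K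
  isClosed : IsClosed K
  smul_mem : ∀ c : ℝ, 0 ≤ c → ∀ x ∈ K, c • x ∈ K
  pointed : K ∩ (-K) = {0}
  full : (interior K).Nonempty

theorem stmt10 {n : ℕ} {K : Set (Fin n → ℝ)} (hK : IsProperCone K)
    (hsub : K ⊆ {z : Fin n → ℝ | ∀ x ∈ K, 0 ≤ z ⬝ᵥ x})
    (A : Matrix (Fin n) (Fin n) ℝ) (hA : ∀ v ∈ K, A.mulVec v ∈ K)
    (b : Fin n → ℝ) (hb : b ∈ K) (hb0 : b ≠ 0) (lam : ℝ) (hlam : 0 < lam) :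
    ¬ ((∃ x ∈ K, (lam • (1 : Matrix (Fin n) (Fin n) ℝ) - A).mulVec x = b) ∧
       (∃ z ∈ {z : Fin n → ℝ | ∀ x ∈ K, 0 ≤ z ⬝ᵥ x},
         (A.transpose - lam • (1 : Matrix (Fin n) (Fin n) ℝ)).mulVec z = b)) := by
  rintro ⟨⟨x, hxK, hx⟩, ⟨z, hzK, hz⟩⟩
  have hAx := hA x hxK
  have hb' : b = lam • x - A.mulVec x := by
    rw [← hx]; simp [Matrix.sub_mulVec, Matrix.smul_mulVec]
  have hz' : A.vecMul z - lam • z = b := by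
    rw [← hz]; simp [Matrix.sub_mulVec, Matrix.smul_mulVec,
      Matrix.mulVec_transpose]
  have h1 : 0 ≤ z ⬝ᵥ b := hzK b hb
  have h2 : 0 ≤ b ⬝ᵥ x := hsub hb x hxK
  have h3 : 0 ≤ b ⬝ᵥ A.mulVec x := hsub hb _ hAx
  have e1 : z ⬝ᵥ b = lam * (z ⬝ᵥ x) - z ⬝ᵥ A.mulVec x := by
    rw [hb']; simp [dotProduct_sub, dotProduct_smul, smul_eq_mul]
  have e2 : b ⬝ᵥ x = z ⬝ᵥ A.mulVec x - lam * (z ⬝ᵥ x) := by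
    rw [← hz']; simp [sub_dotProduct, smul_dotProduct, smul_eq_mul,
      Matrix.dotProduct_mulVec]
  have hbx0 : b ⬝ᵥ x = 0 := by linarith
  have e3 : b ⬝ᵥ b = lam * (b ⬝ᵥ x) - b ⬝ᵥ A.mulVec x := by
    calc b ⬝ᵥ b = b ⬝ᵥ (lam • x - A.mulVec x) := by rw [← hb']
      _ = lam * (b ⬝ᵥ x) - b ⬝ᵥ A.mulVec x := by
          simp [dotProduct_sub, dotProduct_smul, smul_eq_mul]
  have hbb_nonneg : 0 ≤ b ⬝ᵥ b := by
    unfold dotProduct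
    exact Finset.sum_nonneg fun i _ => mul_self_nonneg _
  rw [hbx0, mul_zero, zero_sub] at e3
  have hbb : b ⬝ᵥ b = 0 := by linarith
  exact hb0 (dotProduct_self_eq_zero.mp hbb)
end

section
/- Let K be a proper cone in ℝⁿ, A an n×n real matrix with AK ⊆ K, b ∈ K nonzero, and λ > ρ_b(A). If the equation (A - λI)x = b has a solution x ∈ K, then λ is a distinguished eigenvalue of A for K, i.e., A has an eigenvector in K corresponding to λ. -/
open Filter Matrix
open scoped Topology

lemma IsProperCone.add_mem {n : ℕ} {K : Set (Fin n → ℝ)} (hK : IsProperCone K)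
    {u v : Fin n → ℝ} (hu : u ∈ K) (hv : v ∈ K) : u + v ∈ K := by
  have h2 := hK.convex hu hv (by norm_num : (0:ℝ) ≤ 1/2) (by norm_num : (0:ℝ) ≤ 1/2)
    (by norm_num)
  have h3 := hK.smul_mem 2 (by norm_num) _ h2
  have : (2 : ℝ) • ((1/2 : ℝ) • u + (1/2 : ℝ) • v) = u + v := by
    rw [smul_add, smul_smul, smul_smul]; norm_num
  rwa [this] at h3

theorem stmt11 {n : ℕ} {K : Set (Fin n → ℝ)} (hK : IsProperCone K)
    (A : Matrix (Fin n) (Fin n) ℝ) (hA : ∀ v ∈ K, A.mulVec v ∈ K)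
    (b : Fin n → ℝ) (hb : b ∈ K) (hb0 : b ≠ 0)
    (lam : ℝ) (hlam : 0 < lam) (hgt : localRho A b < lam)
    (x : Fin n → ℝ) (hx : x ∈ K)
    (hsol : (A - lam • (1 : Matrix (Fin n) (Fin n) ℝ)).mulVec x = b) :
    ∃ v : Fin n → ℝ, v ≠ 0 ∧ v ∈ K ∧ A.mulVec v = lam • v := by
  classical
  -- powers stay in K
  have hpow : ∀ m : ℕ, (A ^ m).mulVec b ∈ K := by
    intro m
    induction m with
    | zero => simpa using hb
    | succ m ih =>
      rw [pow_succ', ← Matrix.mulVec_mulVec]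
      exact hA _ ih
  -- a norm bound via the continuous linear map
  set L : (Fin n → ℝ) →L[ℝ] (Fin n → ℝ) :=
    LinearMap.toContinuousLinearMap (Matrix.mulVecLin A) with hL
  have hLapp : ∀ v : Fin n → ℝ, L v = A.mulVec v := by
    intro v; simp [hL]
  have hnorm : ∀ m : ℕ, ‖(A ^ m).mulVec b‖ ≤ ‖L‖ ^ m * ‖b‖ := by
    intro m
    induction m with
    | zero => simp
    | succ m ih =>
      have h1 : (A ^ (m+1)).mulVec b = L ((A ^ m).mulVec b) := by
        rw [hLapp, pow_succ', ← Matrix.mulVec_mulVec]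
      rw [h1]
      calc ‖L ((A ^ m).mulVec b)‖ ≤ ‖L‖ * ‖(A ^ m).mulVec b‖ := L.le_opNorm _
        _ ≤ ‖L‖ * (‖L‖ ^ m * ‖b‖) :=
          mul_le_mul_of_nonneg_left ih (norm_nonneg _)
        _ = ‖L‖ ^ (m+1) * ‖b‖ := by ring
  set C : ℝ := max 1 ‖L‖ * max 1 ‖b‖ with hC
  have hC1 : 1 ≤ C := by
    have := mul_le_mul (le_max_left 1 ‖L‖) (le_max_left 1 ‖b‖) (by norm_num)
      (le_trans zero_le_one (le_max_left 1 ‖L‖))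
    simpa using this
  have hbound : ∀ m : ℕ, 1 ≤ m → ‖(A ^ m).mulVec b‖ ^ ((1:ℝ)/m) ≤ C := by
    intro m hm
    have h1 : ‖(A ^ m).mulVec b‖ ≤ C ^ m := by
      calc ‖(A ^ m).mulVec b‖ ≤ ‖L‖ ^ m * ‖b‖ := hnorm m
        _ ≤ (max 1 ‖L‖) ^ m * (max 1 ‖b‖) ^ m := by
          apply mul_le_mul
          · exact pow_le_pow_left₀ (norm_nonneg _) (le_max_right _ _) m
          · calc ‖b‖ ≤ max 1 ‖b‖ := le_max_right _ _
              _ ≤ (max 1 ‖b‖) ^ m := le_self_pow₀ (le_max_left _ _) (by omega)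
          · exact norm_nonneg _
          · positivity
        _ = C ^ m := by rw [hC, mul_pow]
    calc ‖(A ^ m).mulVec b‖ ^ ((1:ℝ)/m) ≤ (C ^ m) ^ ((1:ℝ)/m) :=
          Real.rpow_le_rpow (norm_nonneg _) h1 (by positivity)
      _ = C := by
          rw [one_div]
          exact Real.pow_rpow_inv_natCast (by linarith) (by omega)
  have hbd : IsBoundedUnder (· ≤ ·) atTop
      (fun m : ℕ => ‖(A ^ m).mulVec b‖ ^ ((1:ℝ)/m)) :=
    ⟨C, eventually_map.2 (eventually_atTop.2 ⟨1, hbound⟩)⟩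
  -- pick r between localRho and lam
  have hmax0 : max (localRho A b) 0 < lam := max_lt hgt hlam
  obtain ⟨r, hr0, hrlam, hrho⟩ : ∃ r : ℝ, 0 < r ∧ r < lam ∧ localRho A b < r := by
    refine ⟨(max (localRho A b) 0 + lam) / 2, ?_, ?_, ?_⟩
    · have : (0:ℝ) ≤ max (localRho A b) 0 := le_max_right _ _
      linarith
    · linarith
    · have : localRho A b ≤ max (localRho A b) 0 := le_max_left _ _
      linarith
  have hev : ∀ᶠ m : ℕ in atTop, ‖(A ^ m).mulVec b‖ ^ ((1:ℝ)/m) < r :=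
    eventually_lt_of_limsup_lt hrho hbd
  -- eventual geometric bound
  have hgeom : ∀ᶠ m : ℕ in atTop, ‖(A ^ m).mulVec b‖ ≤ r ^ m := by
    filter_upwards [hev, eventually_ge_atTop 1] with m hm hm1
    have h0 : (0:ℝ) ≤ ‖(A ^ m).mulVec b‖ ^ ((1:ℝ)/m) := by positivity
    have h2 : (‖(A ^ m).mulVec b‖ ^ ((1:ℝ)/m)) ^ m ≤ r ^ m :=
      pow_le_pow_left₀ h0 hm.le m
    rwa [one_div, Real.rpow_inv_natCast_pow (norm_nonneg _) (by omega)] at h2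
  -- the series
  set f : ℕ → (Fin n → ℝ) := fun m => (lam⁻¹) ^ (m+1) • (A ^ m).mulVec b with hf
  have hfK : ∀ m, f m ∈ K := fun m =>
    hK.smul_mem _ (by positivity) _ (hpow m)
  have hsummable : Summable f := by
    apply Summable.of_norm_bounded_eventually_nat
      (g := fun m => lam⁻¹ * (r / lam) ^ m)
    · exact (summable_geometric_of_lt_one (by positivity)
        ((div_lt_one hlam).2 hrlam)).mul_left _
    · filter_upwards [hgeom] with m hm
      have h1 : ‖f m‖ = (lam⁻¹) ^ (m+1) * ‖(A ^ m).mulVec b‖ := by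
        simp only [hf]
        rw [norm_smul, Real.norm_eq_abs,
          abs_of_nonneg (by positivity : (0:ℝ) ≤ lam⁻¹ ^ (m+1))]
      rw [h1]
      calc (lam⁻¹) ^ (m+1) * ‖(A ^ m).mulVec b‖
          ≤ (lam⁻¹) ^ (m+1) * r ^ m :=
            mul_le_mul_of_nonneg_left hm (by positivity)
        _ = lam⁻¹ * (r / lam) ^ m := by
            rw [pow_succ', div_pow, div_eq_mul_inv, inv_pow]
            ring
  set y : Fin n → ℝ := ∑' m, f m with hy
  -- y ∈ K
  have hyK : y ∈ K := by
    have htend := hsummable.hasSum.tendsto_sum_nat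
    apply hK.isClosed.mem_of_tendsto htend
    filter_upwards with N
    induction N with
    | zero => 
      simp only [Finset.range_zero, Finset.sum_empty]
      have h0 := hK.smul_mem 0 le_rfl b hb
      simpa using h0
    | succ N ih =>
      rw [Finset.sum_range_succ]
      exact hK.add_mem ih (hfK N)
  -- A y = lam • y - b
  have hAy : A.mulVec y = lam • y - b := by
    have h1 : A.mulVec y = ∑' m, A.mulVec (f m) := by
      rw [← hLapp, hy, L.map_tsum hsummable]
      simp_rw [hLapp]
    have h2 : ∀ m, A.mulVec (f m) = lam • f (m+1) := by
      intro m
      have e1 : A.mulVec (f m) = lam⁻¹ ^ (m+1) • (A ^ (m+1)).mulVec b := by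
        simp only [hf]
        rw [Matrix.mulVec_smul, Matrix.mulVec_mulVec, ← pow_succ']
      have e2 : lam • f (m+1) = (lam * lam⁻¹ ^ (m+2)) • (A ^ (m+1)).mulVec b := by
        simp only [hf]
        rw [smul_smul]
      rw [e1, e2]
      congr 1
      have hne : lam ≠ 0 := hlam.ne'
      field_simp
      rw [show m + 2 = m + 1 + 1 from rfl, pow_succ' (1 / lam) (m + 1), ← mul_assoc,
        mul_one_div_cancel hne, one_mul]
    have h3 : ∑' m, A.mulVec (f m) = lam • ∑' m, f (m+1) := by
      simp_rw [h2]; exact tsum_const_smul'' _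
    have h4 : y = f 0 + ∑' m, f (m+1) := (Summable.tsum_eq_zero_add hsummable)
    have h5 : f 0 = lam⁻¹ • b := by rw [hf]; simp
    rw [h1, h3]
    have h6 : ∑' m, f (m+1) = y - lam⁻¹ • b := by
      rw [h4, h5]; abel
    rw [h6, smul_sub, smul_smul, mul_inv_cancel₀ hlam.ne', one_smul]
  -- A x = lam • x + b
  have hAx : A.mulVec x = lam • x + b := by
    have h1 : (A - lam • (1 : Matrix (Fin n) (Fin n) ℝ)).mulVec x
        = A.mulVec x - lam • x := by
      rw [Matrix.sub_mulVec, Matrix.smul_mulVec, Matrix.one_mulVec]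
    rw [h1] at hsol
    rw [← hsol]; abel
  refine ⟨x + y, ?_, hK.add_mem hx hyK, ?_⟩
  · intro h0
    have hxK' : x ∈ K ∩ (-K) := by
      refine ⟨hx, ?_⟩
      rw [Set.mem_neg, neg_eq_of_add_eq_zero_right h0]
      exact hyK
    rw [hK.pointed] at hxK'
    have hx0 : x = 0 := hxK'
    rw [hx0] at hsol
    rw [Matrix.mulVec_zero] at hsol
    exact hb0 hsol.symm
  · rw [Matrix.mulVec_add, hAx, hAy, smul_add]
    abel
end

section
/- Let K be a proper cone in ℝⁿ, A an n×n real matrix with AK ⊆ K, and b ∈ K nonzero. If the equation (A - λI)x = b has a solution x ∈ K for some λ > 0, then λ ≤ ρ(A). -/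
open Filter Matrix
open scoped Topology

attribute [local instance] Matrix.linftyOpNormedAddCommGroup

theorem stmt12 {n : ℕ} {K : Set (Fin n → ℝ)} (hK : IsProperCone K)
    (A : Matrix (Fin n) (Fin n) ℝ) (hA : ∀ v ∈ K, A.mulVec v ∈ K)
    (b : Fin n → ℝ) (hb : b ∈ K) (hb0 : b ≠ 0) (lam : ℝ) (hlam : 0 < lam)
    (hsol : ∃ x ∈ K, (A - lam • (1 : Matrix (Fin n) (Fin n) ℝ)).mulVec x = b) :
    lam ≤ rho A := by
  obtain ⟨x, hx, hxeq⟩ := hsol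
  have h0K : (0 : Fin n → ℝ) ∈ K := by
    have : (0 : Fin n → ℝ) ∈ K ∩ (-K) := by rw [hK.pointed]; rfl
    exact this.1
  have hadd : ∀ u ∈ K, ∀ v ∈ K, u + v ∈ K := by
    intro u hu v hv
    have h := hK.convex hu hv (by norm_num : (0:ℝ) ≤ 1/2) (by norm_num : (0:ℝ) ≤ 1/2)
      (by norm_num)
    have h2 := hK.smul_mem 2 (by norm_num) _ h
    have heq : (2:ℝ) • ((1/2 : ℝ) • u + (1/2 : ℝ) • v) = u + v := by
      rw [smul_add, smul_smul, smul_smul]; norm_num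
    rwa [heq] at h2
  have hAx : A.mulVec x = lam • x + b := by
    have h1 : A.mulVec x - lam • x = b := by
      rw [← hxeq, Matrix.sub_mulVec, Matrix.smul_mulVec, Matrix.one_mulVec]
    rw [← h1]; abel
  have hx0 : x ≠ 0 := by
    rintro rfl
    exact hb0 (by simpa using hxeq.symm)
  have key : ∀ m : ℕ, (A ^ m).mulVec x - lam ^ m • x ∈ K := by
    intro m
    induction m with
    | zero => simpa using h0K
    | succ m ih =>
      have h2 : A.mulVec ((A ^ m).mulVec x - lam ^ m • x) ∈ K := hA _ ih
      have h3 : lam ^ m • b ∈ K := hK.smul_mem _ (by positivity) _ hb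
      have h4 := hadd _ h2 _ h3
      have h5 : A.mulVec ((A ^ m).mulVec x - lam ^ m • x) + lam ^ m • b
          = (A ^ (m+1)).mulVec x - lam ^ (m+1) • x := by
        rw [pow_succ', pow_succ, Matrix.mulVec_sub, Matrix.mulVec_smul, hAx,
          ← Matrix.mulVec_mulVec]
        module
      rwa [h5] at h4
  -- separation functional
  have hnx : -x ∉ K := by
    intro hmem
    have hxm : x ∈ K ∩ (-K) := ⟨hx, by simpa using hmem⟩
    rw [hK.pointed] at hxm
    exact hx0 hxm
  obtain ⟨f, u, hfu, hfK⟩ := geometric_hahn_banach_point_closed hK.convex hK.isClosed hnx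
  have hu0 : u < 0 := by simpa using hfK 0 h0K
  have hfnonneg : ∀ y ∈ K, 0 ≤ f y := by
    intro y hy
    by_contra h
    push_neg at h
    have ht : (0:ℝ) ≤ (u - 1) / f y :=
      (div_pos_iff.mpr (Or.inr ⟨by linarith, h⟩)).le
    have h2 := hfK _ (hK.smul_mem _ ht _ hy)
    rw [f.map_smul, smul_eq_mul, div_mul_cancel₀ _ (ne_of_lt h)] at h2
    linarith
  have hfx : 0 < f x := by
    have h3 : f (-x) < u := hfu
    rw [f.map_neg] at h3
    linarith
  have hxpos : 0 < ‖x‖ := norm_pos_iff.mpr hx0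
  have hfpos : 0 < ‖f‖ := by
    by_contra h
    push_neg at h
    have h0 : ‖f‖ = 0 := le_antisymm h (norm_nonneg _)
    have h2 : f x ≤ ‖f x‖ := le_abs_self _
    have h3 : ‖f x‖ ≤ ‖f‖ * ‖x‖ := f.le_opNorm x
    rw [h0, zero_mul] at h3
    linarith
  set C : ℝ := f x / (‖f‖ * ‖x‖) with hC
  have hCpos : 0 < C := by positivity
  -- lower bound on ‖A^m‖
  have hlow : ∀ m : ℕ, C * lam ^ m ≤ ‖A ^ m‖ := by
    intro m
    have h1 : lam ^ m * f x ≤ f ((A ^ m).mulVec x) := by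
      have h0 := hfnonneg _ (key m)
      rw [f.map_sub, f.map_smul, smul_eq_mul] at h0
      linarith
    have h2 : f ((A ^ m).mulVec x) ≤ ‖f‖ * (‖A ^ m‖ * ‖x‖) := by
      calc f ((A ^ m).mulVec x) ≤ ‖f ((A ^ m).mulVec x)‖ := le_abs_self _
        _ ≤ ‖f‖ * ‖(A ^ m).mulVec x‖ := f.le_opNorm _
        _ ≤ ‖f‖ * (‖A ^ m‖ * ‖x‖) :=
            mul_le_mul_of_nonneg_left (Matrix.linfty_opNorm_mulVec _ _) (norm_nonneg _)
    rw [hC, div_mul_eq_mul_div, div_le_iff₀ (by positivity)]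
    nlinarith
  -- norm of powers bound
  have hpow : ∀ k : ℕ, ‖A ^ (k+1)‖ ≤ ‖A‖ ^ (k+1) := by
    intro k
    induction k with
    | zero => simp
    | succ k ih =>
      calc ‖A ^ (k+2)‖ = ‖A ^ (k+1) * A‖ := by rw [← pow_succ]
        _ ≤ ‖A ^ (k+1)‖ * ‖A‖ := Matrix.linfty_opNorm_mul _ _
        _ ≤ ‖A‖ ^ (k+1) * ‖A‖ := mul_le_mul_of_nonneg_right ih (norm_nonneg _)
        _ = ‖A‖ ^ (k+2) := by rw [← pow_succ]
  have hbound : ∀ m : ℕ, ‖A ^ m‖ ^ ((1:ℝ)/m) ≤ max ‖A‖ 1 := by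
    intro m
    match m with
    | 0 => rw [Nat.cast_zero, div_zero, Real.rpow_zero]; exact le_max_right _ _
    | (k+1) =>
      have hm0 : ((k+1 : ℕ) : ℝ) ≠ 0 := Nat.cast_ne_zero.mpr (by omega)
      have h1 : ‖A ^ (k+1)‖ ≤ (max ‖A‖ 1) ^ (k+1) :=
        (hpow k).trans (pow_le_pow_left₀ (norm_nonneg _) (le_max_left _ _) _)
      have h2 : ‖A ^ (k+1)‖ ^ ((1:ℝ)/(k+1:ℕ)) ≤ ((max ‖A‖ 1) ^ (k+1)) ^ ((1:ℝ)/(k+1:ℕ)) :=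
        Real.rpow_le_rpow (norm_nonneg _) h1 (by positivity)
      have h3 : ((max ‖A‖ 1) ^ (k+1) : ℝ) ^ ((1:ℝ)/(k+1:ℕ)) = max ‖A‖ 1 := by
        rw [← Real.rpow_natCast (max ‖A‖ 1) (k+1), ← Real.rpow_mul (by positivity),
          mul_one_div, div_self hm0, Real.rpow_one]
      rw [h3] at h2
      exact h2
  have hBdd : IsBoundedUnder (· ≤ ·) atTop (fun m : ℕ => ‖A ^ m‖ ^ ((1:ℝ)/m)) :=
    isBoundedUnder_of ⟨max ‖A‖ 1, hbound⟩
  -- lower bound sequence tends to lam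
  have hg : Tendsto (fun m : ℕ => C ^ ((1:ℝ)/m) * lam) atTop (𝓝 lam) := by
    have h1 : Tendsto (fun m : ℕ => (1:ℝ)/m) atTop (𝓝 0) := by
      exact tendsto_one_div_atTop_nhds_zero_nat
    have h2 : Tendsto (fun m : ℕ => C ^ ((1:ℝ)/m)) atTop (𝓝 1) := by
      have h3 : Tendsto (fun y : ℝ => C ^ y) (𝓝 0) (𝓝 (C ^ (0:ℝ))) :=
        (Real.continuousAt_const_rpow hCpos.ne').tendsto
      rw [Real.rpow_zero] at h3
      exact h3.comp h1
    simpa using h2.mul_const lam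
  -- eventual inequality
  have hineq : ∀ m : ℕ, 1 ≤ m → C ^ ((1:ℝ)/m) * lam ≤ ‖A ^ m‖ ^ ((1:ℝ)/m) := by
    intro m hm
    have hm0 : ((m : ℕ) : ℝ) ≠ 0 := Nat.cast_ne_zero.mpr (by omega)
    have h1 : (C * lam ^ m) ^ ((1:ℝ)/m) ≤ ‖A ^ m‖ ^ ((1:ℝ)/m) :=
      Real.rpow_le_rpow (by positivity) (hlow m) (by positivity)
    have h2 : (C * lam ^ m) ^ ((1:ℝ)/m) = C ^ ((1:ℝ)/m) * lam := by
      rw [Real.mul_rpow hCpos.le (by positivity)]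
      congr 1
      rw [← Real.rpow_natCast lam m, ← Real.rpow_mul hlam.le, mul_one_div,
        div_self hm0, Real.rpow_one]
    rw [h2] at h1
    exact h1
  -- conclude
  rw [rho]
  refine le_of_forall_lt fun a ha => ?_
  set a' : ℝ := (a + lam) / 2 with ha'
  have haa' : a < a' := by rw [ha']; linarith
  have ha'lam : a' < lam := by rw [ha']; linarith
  have h4 : a' ≤ limsup (fun m : ℕ => ‖A ^ m‖ ^ ((1:ℝ)/m)) atTop := by
    apply le_limsup_of_frequently_le _ hBdd
    have hev : ∀ᶠ m : ℕ in atTop, a' ≤ ‖A ^ m‖ ^ ((1:ℝ)/m) := by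
      have h1 : ∀ᶠ m : ℕ in atTop, a' < C ^ ((1:ℝ)/m) * lam :=
        hg.eventually (eventually_gt_nhds ha'lam)
      filter_upwards [h1, eventually_ge_atTop 1] with m hm1 hm2
      exact hm1.le.trans (hineq m hm2)
    exact hev.frequently
  exact haa'.trans_le h4
end

section
/- Let K be a proper cone in ℝⁿ, A an n×n real matrix with AK ⊆ K, and λ ∈ ℝ. If A - λI is invertible and (A - λI)^{-1} K ⊆ K, then λ is strictly less than every distinguished eigenvalue of A for K and strictly less than every distinguished eigenvalue of Aᵀ for K*. -/
open Filter Matrix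
open scoped Topology

theorem stmt14 {n : ℕ} {K : Set (Fin n → ℝ)} (hK : IsProperCone K)
    (A : Matrix (Fin n) (Fin n) ℝ) (hA : ∀ v ∈ K, A.mulVec v ∈ K) (lam : ℝ)
    (hdet : (A - lam • (1 : Matrix (Fin n) (Fin n) ℝ)).det ≠ 0)
    (hinv : ∀ b ∈ K, ((A - lam • (1 : Matrix (Fin n) (Fin n) ℝ))⁻¹).mulVec b ∈ K) :
    (∀ (mu : ℝ) (v : Fin n → ℝ), v ≠ 0 → v ∈ K → A.mulVec v = mu • v → lam < mu) ∧
    (∀ (mu : ℝ) (z : Fin n → ℝ), z ≠ 0 → (∀ x ∈ K, 0 ≤ z ⬝ᵥ x) →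
      A.transpose.mulVec z = mu • z → lam < mu) := by
  set B : Matrix (Fin n) (Fin n) ℝ := A - lam • (1 : Matrix (Fin n) (Fin n) ℝ) with hB
  have hunit : IsUnit B.det := isUnit_iff_ne_zero.mpr hdet
  have hBiB : B⁻¹ * B = 1 := B.nonsing_inv_mul hunit
  have hBBi : B * B⁻¹ = 1 := B.mul_nonsing_inv hunit
  have hBmul : ∀ v : Fin n → ℝ, B.mulVec v = A.mulVec v - lam • v := by
    intro v
    simp [hB, Matrix.sub_mulVec, Matrix.smul_mulVec, Matrix.one_mulVec]
  have hinj : ∀ v : Fin n → ℝ, B.mulVec v = 0 → v = 0 := by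
    intro v hv
    have : (B⁻¹ * B).mulVec v = 0 := by
      rw [← Matrix.mulVec_mulVec, hv, Matrix.mulVec_zero]
    rwa [hBiB, Matrix.one_mulVec] at this
  constructor
  · intro mu v hv hvK heig
    have hBv : B.mulVec v = (mu - lam) • v := by
      rw [hBmul, heig, sub_smul]
    have hc : mu - lam ≠ 0 := by
      intro h
      exact hv (hinj v (by rw [hBv, h, zero_smul]))
    by_contra hle
    have hcneg : mu - lam < 0 := by
      cases lt_or_eq_of_le (le_of_not_gt hle) with
      | inl h => linarith
      | inr h => exact absurd h.symm (fun he => hc (by rw [he, sub_self]))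
    -- B⁻¹ v = (mu - lam)⁻¹ • v
    have hBinv : B⁻¹.mulVec v = (mu - lam)⁻¹ • v := by
      have : B⁻¹.mulVec (B.mulVec v) = v := by
        rw [Matrix.mulVec_mulVec, hBiB, Matrix.one_mulVec]
      rw [hBv, Matrix.mulVec_smul] at this
      have h2 := congrArg (fun w => (mu - lam)⁻¹ • w) this
      simp only [smul_smul, inv_mul_cancel₀ hc, one_smul] at h2
      exact h2
    have hw : (mu - lam)⁻¹ • v ∈ K := hBinv ▸ hinv v hvK
    have hcinv : (mu - lam)⁻¹ < 0 := inv_neg''.mpr hcneg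
    have hnw : -((mu - lam)⁻¹ • v) ∈ K := by
      have : (-(mu - lam)⁻¹) • v ∈ K := hK.smul_mem _ (by linarith) v hvK
      simpa [neg_smul] using this
    have : (mu - lam)⁻¹ • v ∈ K ∩ (-K) := ⟨hw, by simpa using hnw⟩
    rw [hK.pointed] at this
    have hv0 : v = 0 := by
      have h0 : (mu - lam)⁻¹ • v = 0 := this
      have := congrArg (fun w => (mu - lam) • w) h0
      simpa [smul_smul, mul_inv_cancel₀ hc] using this
    exact hv hv0
  · intro mu z hz hzK heig
    have hBtz : Bᵀ.mulVec z = (mu - lam) • z := by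
      have : Bᵀ = Aᵀ - lam • 1 := by
        simp [hB, Matrix.transpose_sub, Matrix.transpose_smul]
      rw [this, Matrix.sub_mulVec, Matrix.smul_mulVec, Matrix.one_mulVec, heig, sub_smul]
    have hc : mu - lam ≠ 0 := by
      intro h
      apply hz
      have hz0 : Bᵀ.mulVec z = 0 := by rw [hBtz, h, zero_smul]
      have hunitT : IsUnit Bᵀ.det := by rwa [Matrix.det_transpose]
      have : (Bᵀ⁻¹ * Bᵀ).mulVec z = 0 := by
        rw [← Matrix.mulVec_mulVec, hz0, Matrix.mulVec_zero]
      rwa [Bᵀ.nonsing_inv_mul hunitT, Matrix.one_mulVec] at this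
    by_contra hle
    have hcneg : mu - lam < 0 := by
      rcases lt_or_eq_of_le (le_of_not_gt hle) with h | h
      · linarith
      · exact absurd (by rw [← h, sub_self]) hc
    -- z ⬝ x = 0 for all x ∈ K
    have hzero : ∀ x ∈ K, z ⬝ᵥ x = 0 := by
      intro x hx
      have hy : B⁻¹.mulVec x ∈ K := hinv x hx
      have hxy : B.mulVec (B⁻¹.mulVec x) = x := by
        rw [Matrix.mulVec_mulVec, hBBi, Matrix.one_mulVec]
      have key : z ⬝ᵥ x = (mu - lam) * (z ⬝ᵥ B⁻¹.mulVec x) := by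
        conv_lhs => rw [← hxy]
        rw [Matrix.dotProduct_mulVec, ← Matrix.mulVec_transpose, hBtz,
          smul_dotProduct, smul_eq_mul]
      have h1 : 0 ≤ z ⬝ᵥ B⁻¹.mulVec x := hzK _ hy
      have h2 : z ⬝ᵥ x ≤ 0 := by
        rw [key]
        exact mul_nonpos_of_nonpos_of_nonneg hcneg.le h1
      exact le_antisymm h2 (hzK x hx)
    obtain ⟨x0, hx0⟩ := hK.full
    have hx0K : x0 ∈ K := interior_subset hx0
    -- for small t > 0, x0 + t • z ∈ K
    have hcont : Tendsto (fun t : ℝ => x0 + t • z) (𝓝 0) (𝓝 x0) := by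
      have : Continuous fun t : ℝ => x0 + t • z := continuous_const.add (continuous_id.smul continuous_const)
      have h0 : x0 + (0 : ℝ) • z = x0 := by simp
      simpa [h0] using this.tendsto 0
    have hev : ∀ᶠ t : ℝ in 𝓝 (0:ℝ), x0 + t • z ∈ K := by
      filter_upwards [hcont.eventually_mem (mem_interior_iff_mem_nhds.mp hx0)] with t ht
      exact ht
    obtain ⟨t, htK, ht0⟩ := ((hev.filter_mono nhdsWithin_le_nhds).and
      (eventually_mem_nhdsWithin (s := Set.Ioi (0:ℝ)))).exists
    have h0 : z ⬝ᵥ (x0 + t • z) = 0 := hzero _ htK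
    have hzx0 : z ⬝ᵥ x0 = 0 := hzero _ hx0K
    rw [dotProduct_add, hzx0, dotProduct_smul, zero_add, smul_eq_mul] at h0
    have hzz : z ⬝ᵥ z = 0 := by
      rcases mul_eq_zero.mp h0 with h | h
      · exact absurd h (ne_of_gt ht0)
      · exact h
    exact hz (dotProduct_self_eq_zero.mp hzz)
end

section
/- Let K be a proper cone in ℝⁿ, A an n×n real matrix with AK ⊆ K, and x ∈ K nonzero. Define the upper Collatz-Wielandt number R_A(x) = inf{σ ≥ 0 : σx - Ax ∈ K} (infimum of the empty set being ∞). Then R_A(x) = ρ_x(A) if and only if ρ_x(A)·x - Ax ∈ K. -/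
open Filter Matrix
open scoped Topology

namespace CWAux

variable {n : ℕ} {K : Set (Fin n → ℝ)}

lemma add_mem (hK : IsProperCone K) {y z : Fin n → ℝ} (hy : y ∈ K) (hz : z ∈ K) :
    y + z ∈ K := by
  have h := hK.convex hy hz (by norm_num : (0:ℝ) ≤ 1/2) (by norm_num : (0:ℝ) ≤ 1/2)
    (by norm_num)
  have h2 := hK.smul_mem 2 (by norm_num) _ h
  have : (2:ℝ) • ((1/2 : ℝ) • y + (1/2 : ℝ) • z) = y + z := by
    rw [smul_add, smul_smul, smul_smul]; norm_num
  rwa [this] at h2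

/-- Normality of a closed pointed cone in finite dimensions. -/
lemma normal (hK : IsProperCone K) :
    ∃ C > (0:ℝ), ∀ y z : Fin n → ℝ, y ∈ K → z - y ∈ K → ‖y‖ ≤ C * ‖z‖ := by
  by_contra hcon
  push_neg at hcon
  choose y z hy hzy hlt using fun m : ℕ => hcon (m + 1) (by positivity)
  have hy0 : ∀ m, (0:ℝ) < ‖y m‖ := by
    intro m
    have := hlt m
    have h0 : (0:ℝ) ≤ ((m:ℝ) + 1) * ‖z m‖ := by positivity
    linarith
  set u : ℕ → Fin n → ℝ := fun m => ‖y m‖⁻¹ • y m with hu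
  set w : ℕ → Fin n → ℝ := fun m => ‖y m‖⁻¹ • z m with hw
  have humem : ∀ m, u m ∈ K := fun m =>
    hK.smul_mem _ (by positivity) _ (hy m)
  have hunorm : ∀ m, ‖u m‖ = 1 := by
    intro m
    simp [hu, norm_smul, abs_of_pos (inv_pos.2 (hy0 m)),
      inv_mul_cancel₀ (hy0 m).ne']
  have hwu : ∀ m, w m - u m ∈ K := by
    intro m
    have := hK.smul_mem ‖y m‖⁻¹ (by positivity) _ (hzy m)
    rwa [smul_sub] at this
  have hwnorm : ∀ m, ‖w m‖ ≤ 1 / ((m:ℝ) + 1) := by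
    intro m
    have hlt' := hlt m
    rw [hw]
    simp only [norm_smul, Real.norm_eq_abs, abs_of_pos (inv_pos.2 (hy0 m))]
    have hstep : ‖y m‖⁻¹ * ‖z m‖ ≤ ‖y m‖⁻¹ * (‖y m‖ / ((m:ℝ)+1)) := by
      apply mul_le_mul_of_nonneg_left _ (by positivity)
      rw [le_div_iff₀ (by positivity)]
      nlinarith [norm_nonneg (z m)]
    have heq2 : ‖y m‖⁻¹ * (‖y m‖ / ((m:ℝ)+1)) = 1/((m:ℝ)+1) := by
      field_simp
      exact div_self (hy0 m).ne'
    rw [heq2] at hstep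
    exact hstep
  have hwlim : Tendsto w atTop (𝓝 0) := by
    rw [tendsto_zero_iff_norm_tendsto_zero]
    refine squeeze_zero (fun m => norm_nonneg _) hwnorm ?_
    have : Tendsto (fun m : ℕ => 1 / ((m:ℝ)+1)) atTop (𝓝 0) :=
      tendsto_one_div_add_atTop_nhds_zero_nat
    exact this
  have hcompact : IsCompact (K ∩ Metric.sphere 0 1) :=
    (isCompact_sphere (0 : Fin n → ℝ) 1).inter_left hK.isClosed
  have humem' : ∀ m, u m ∈ K ∩ Metric.sphere 0 1 := by
    intro m
    refine ⟨humem m, ?_⟩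
    simp [mem_sphere_iff_norm, hunorm m]
  obtain ⟨u₀, hu₀mem, φ, hφ, hlim⟩ := hcompact.tendsto_subseq humem'
  have hwφ : Tendsto (w ∘ φ) atTop (𝓝 0) :=
    hwlim.comp hφ.tendsto_atTop
  have hdiff : Tendsto (fun m => w (φ m) - u (φ m)) atTop (𝓝 (0 - u₀)) :=
    hwφ.sub hlim
  have hneg : -u₀ ∈ K := by
    have : (0 : Fin n → ℝ) - u₀ = -u₀ := by simp
    rw [← this]
    exact hK.isClosed.mem_of_tendsto hdiff (Eventually.of_forall fun m => hwu (φ m))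
  have : u₀ ∈ K ∩ (-K) := ⟨hu₀mem.1, by simpa using hneg⟩
  rw [hK.pointed] at this
  have : u₀ = 0 := this
  have hn := hu₀mem.2
  rw [this] at hn
  simp at hn

lemma pow_mem (hK : IsProperCone K) {A : Matrix (Fin n) (Fin n) ℝ}
    (hA : ∀ v ∈ K, A.mulVec v ∈ K) {x : Fin n → ℝ} (hx : x ∈ K) (m : ℕ) :
    (A ^ m).mulVec x ∈ K := by
  induction m with
  | zero => simpa using hx
  | succ m ih =>
    have := hA _ ih
    rwa [Matrix.mulVec_mulVec, ← pow_succ'] at this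

lemma key (hK : IsProperCone K) {A : Matrix (Fin n) (Fin n) ℝ}
    (hA : ∀ v ∈ K, A.mulVec v ∈ K) {x : Fin n → ℝ} (hx : x ∈ K)
    {σ : ℝ} (hσ0 : 0 ≤ σ) (hσ : σ • x - A.mulVec x ∈ K) (m : ℕ) :
    σ ^ m • x - (A ^ m).mulVec x ∈ K := by
  induction m with
  | zero =>
    have := hK.smul_mem 0 le_rfl x hx
    simpa using this
  | succ m ih =>
    have h1 : σ ^ m • (σ • x - A.mulVec x) ∈ K :=
      hK.smul_mem _ (pow_nonneg hσ0 m) _ hσ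
    have h2 : A.mulVec (σ ^ m • x - (A ^ m).mulVec x) ∈ K := hA _ ih
    have h3 := add_mem hK h1 h2
    have heq : σ ^ m • (σ • x - A.mulVec x) +
        A.mulVec (σ ^ m • x - (A ^ m).mulVec x) =
        σ ^ (m+1) • x - (A ^ (m+1)).mulVec x := by
      rw [Matrix.mulVec_sub, Matrix.mulVec_smul, Matrix.mulVec_mulVec, ← pow_succ',
        smul_sub, smul_smul, ← pow_succ]
      abel
    rwa [heq] at h3

/-- The sequence `‖A^m x‖^(1/m)` is bounded above. -/
lemma bounded (A : Matrix (Fin n) (Fin n) ℝ) (x : Fin n → ℝ) :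
    IsBoundedUnder (· ≤ ·) atTop
      (fun m : ℕ => ‖(A ^ m).mulVec x‖ ^ ((1:ℝ) / m)) := by
  set T : (Fin n → ℝ) →L[ℝ] (Fin n → ℝ) :=
    LinearMap.toContinuousLinearMap A.mulVecLin with hT
  set M : ℝ := max ‖T‖ 1 with hM
  have hM1 : (1:ℝ) ≤ M := le_max_right _ _
  have hbound : ∀ m : ℕ, ‖(A ^ m).mulVec x‖ ≤ M ^ m * ‖x‖ := by
    intro m
    induction m with
    | zero => simp
    | succ m ih =>
      have h1 : (A ^ (m+1)).mulVec x = A.mulVec ((A ^ m).mulVec x) := by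
        rw [Matrix.mulVec_mulVec, ← pow_succ']
      rw [h1]
      have h2 : ‖A.mulVec ((A ^ m).mulVec x)‖ ≤ ‖T‖ * ‖(A ^ m).mulVec x‖ := by
        have := T.le_opNorm ((A ^ m).mulVec x)
        simpa [hT] using this
      calc ‖A.mulVec ((A ^ m).mulVec x)‖ ≤ ‖T‖ * ‖(A ^ m).mulVec x‖ := h2
        _ ≤ M * (M ^ m * ‖x‖) := by
            apply mul_le_mul (le_max_left _ _) ih (norm_nonneg _)
            linarith
        _ = M ^ (m+1) * ‖x‖ := by ring
  refine ⟨M * max ‖x‖ 1, ?_⟩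
  rw [eventually_map]
  filter_upwards [eventually_ge_atTop 1] with m hm
  have hmpos : (0:ℝ) < m := by exact_mod_cast hm
  have h1 : ‖(A ^ m).mulVec x‖ ^ ((1:ℝ)/m) ≤ (M ^ m * ‖x‖) ^ ((1:ℝ)/m) :=
    Real.rpow_le_rpow (norm_nonneg _) (hbound m) (by positivity)
  have h2 : (M ^ m * ‖x‖) ^ ((1:ℝ)/m) = M * ‖x‖ ^ ((1:ℝ)/m) := by
    rw [Real.mul_rpow (by positivity) (norm_nonneg _), ← Real.rpow_natCast M m,
      ← Real.rpow_mul (by positivity)]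
    congr 1
    field_simp
    exact Real.rpow_one M
  have h3 : ‖x‖ ^ ((1:ℝ)/m) ≤ max ‖x‖ 1 := by
    rcases le_or_gt ‖x‖ 1 with h | h
    · calc ‖x‖ ^ ((1:ℝ)/m) ≤ (1:ℝ) ^ ((1:ℝ)/m) :=
            Real.rpow_le_rpow (norm_nonneg _) h (by positivity)
        _ = 1 := Real.one_rpow _
        _ ≤ max ‖x‖ 1 := le_max_right _ _
    · calc ‖x‖ ^ ((1:ℝ)/m) ≤ ‖x‖ ^ (1:ℝ) := by
            apply Real.rpow_le_rpow_of_exponent_le h.le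
            rw [div_le_one hmpos]
            exact_mod_cast hm
        _ = ‖x‖ := Real.rpow_one _
        _ ≤ max ‖x‖ 1 := le_max_left _ _
  calc ‖(A ^ m).mulVec x‖ ^ ((1:ℝ)/m) ≤ M * ‖x‖ ^ ((1:ℝ)/m) := by rw [← h2]; exact h1
    _ ≤ M * max ‖x‖ 1 := by
        apply mul_le_mul_of_nonneg_left h3; linarith

lemma rho_nonneg (A : Matrix (Fin n) (Fin n) ℝ) (x : Fin n → ℝ) :
    0 ≤ localRho A x := by
  apply le_limsup_of_frequently_le
  · exact Frequently.of_forall fun m => Real.rpow_nonneg (norm_nonneg _) _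
  · exact bounded A x

/-- `ρ_x(A) ≤ R_A(x)`: if `σ ≥ 0` and `σ•x - Ax ∈ K` then `localRho A x ≤ σ`. -/
lemma rho_le (hK : IsProperCone K) {A : Matrix (Fin n) (Fin n) ℝ}
    (hA : ∀ v ∈ K, A.mulVec v ∈ K) {x : Fin n → ℝ} (hx : x ∈ K) (hx0 : x ≠ 0)
    {σ : ℝ} (hσ0 : 0 ≤ σ) (hσ : σ • x - A.mulVec x ∈ K) :
    localRho A x ≤ σ := by
  obtain ⟨C, hC, hnorm⟩ := normal hK
  have hxpos : (0:ℝ) < ‖x‖ := norm_pos_iff.2 hx0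
  have hCx : (0:ℝ) < C * ‖x‖ := by positivity
  -- pointwise bound ‖A^m x‖ ≤ C σ^m ‖x‖
  have hbd : ∀ m : ℕ, ‖(A ^ m).mulVec x‖ ≤ C * ‖x‖ * σ ^ m := by
    intro m
    have h1 := hnorm _ _ (pow_mem hK hA hx m) (key hK hA hx hσ0 hσ m)
    have h2 : ‖σ ^ m • x‖ = σ ^ m * ‖x‖ := by
      rw [norm_smul, Real.norm_eq_abs, abs_of_nonneg (pow_nonneg hσ0 m)]
    rw [h2] at h1
    nlinarith
  -- the dominating sequence tends to σ
  set g : ℕ → ℝ := fun m => (C * ‖x‖) ^ ((1:ℝ)/m) * σ with hg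
  have hgtend : Tendsto g atTop (𝓝 σ) := by
    have h1 : Tendsto (fun m : ℕ => (C * ‖x‖) ^ ((1:ℝ)/m)) atTop (𝓝 1) := by
      have heq : ∀ m : ℕ, (C * ‖x‖) ^ ((1:ℝ)/m) =
          Real.exp (Real.log (C * ‖x‖) * ((1:ℝ)/m)) := fun m =>
        Real.rpow_def_of_pos hCx _
      have h2 : Tendsto (fun m : ℕ => Real.log (C * ‖x‖) * ((1:ℝ)/(m:ℝ))) atTop
          (𝓝 (Real.log (C * ‖x‖) * 0)) :=
        tendsto_one_div_atTop_nhds_zero_nat.const_mul _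
      rw [mul_zero] at h2
      have h3 := (Real.continuous_exp.tendsto 0).comp h2
      rw [Real.exp_zero] at h3
      simp only [heq]
      exact h3
    have h4 := h1.mul_const σ
    rw [one_mul] at h4
    exact h4
  have hle : ∀ᶠ m : ℕ in atTop,
      ‖(A ^ m).mulVec x‖ ^ ((1:ℝ)/m) ≤ g m := by
    filter_upwards [eventually_ge_atTop 1] with m hm
    have hm0 : (m:ℝ) ≠ 0 := by positivity
    have h1 : ‖(A ^ m).mulVec x‖ ^ ((1:ℝ)/m) ≤ (C * ‖x‖ * σ ^ m) ^ ((1:ℝ)/m) :=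
      Real.rpow_le_rpow (norm_nonneg _) (hbd m) (by positivity)
    have h2 : (C * ‖x‖ * σ ^ m) ^ ((1:ℝ)/m) = g m := by
      rw [hg]
      rw [Real.mul_rpow (le_of_lt hCx) (pow_nonneg hσ0 m)]
      congr 1
      rw [← Real.rpow_natCast σ m, ← Real.rpow_mul hσ0]
      rw [mul_one_div, div_self hm0, Real.rpow_one]
    rw [← h2]; exact h1
  have hcb : IsCoboundedUnder (· ≤ ·) atTop
      (fun m : ℕ => ‖(A ^ m).mulVec x‖ ^ ((1:ℝ)/m)) := by
    exact IsBoundedUnder.isCoboundedUnder_le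
      ⟨0, eventually_map.2 (Eventually.of_forall fun m =>
        Real.rpow_nonneg (norm_nonneg _) _)⟩
  calc localRho A x ≤ limsup g atTop :=
        limsup_le_limsup hle hcb (hgtend.isBoundedUnder_le)
    _ = σ := hgtend.limsup_eq

end CWAux

/-- `R_A(x) = ρ_x(A)` (with `R_A(x)` finite, i.e. the defining set nonempty) iff
`ρ_x(A)·x - Ax ∈ K`. -/
theorem stmt15 {n : ℕ} {K : Set (Fin n → ℝ)} (hK : IsProperCone K)
    (A : Matrix (Fin n) (Fin n) ℝ) (hA : ∀ v ∈ K, A.mulVec v ∈ K)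
    (x : Fin n → ℝ) (hx : x ∈ K) (hx0 : x ≠ 0) :
    ({σ : ℝ | 0 ≤ σ ∧ σ • x - A.mulVec x ∈ K}.Nonempty ∧
      sInf {σ : ℝ | 0 ≤ σ ∧ σ • x - A.mulVec x ∈ K} = localRho A x) ↔
    localRho A x • x - A.mulVec x ∈ K := by
  set S : Set ℝ := {σ : ℝ | 0 ≤ σ ∧ σ • x - A.mulVec x ∈ K} with hS
  have hbdd : BddBelow S := ⟨0, fun σ hσ => hσ.1⟩
  have hclosed : IsClosed S := by
    have h1 : IsClosed {σ : ℝ | 0 ≤ σ} := isClosed_le continuous_const continuous_id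
    have h2 : IsClosed {σ : ℝ | σ • x - A.mulVec x ∈ K} :=
      hK.isClosed.preimage (by fun_prop)
    exact h1.inter h2
  constructor
  · rintro ⟨hne, hinf⟩
    have := hclosed.csInf_mem hne hbdd
    rw [hinf] at this
    exact this.2
  · intro h
    have hρ0 : 0 ≤ localRho A x := CWAux.rho_nonneg A x
    have hmem : localRho A x ∈ S := ⟨hρ0, h⟩
    refine ⟨⟨_, hmem⟩, le_antisymm (csInf_le hbdd hmem) ?_⟩
    exact le_csInf ⟨_, hmem⟩ fun σ hσ => CWAux.rho_le hK hA hx hx0 hσ.1 hσ.2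
end

section
/- Let K be a proper cone in ℝⁿ and A an n×n real matrix with AK ⊆ K. If there exists x in the interior of K with ρ(A)·x - Ax ∈ K, then the eigenvalue ρ(A) of A has index 1, i.e., ker(ρ(A)I - A)² = ker(ρ(A)I - A). -/
open Filter Matrix
open scoped Topology

attribute [local instance] Matrix.linftyOpNormedAddCommGroup

namespace Stmt16Aux

variable {n : ℕ} {K : Set (Fin n → ℝ)}

lemma zero_mem (hK : IsProperCone K) : (0 : Fin n → ℝ) ∈ K := by
  obtain ⟨x, hx⟩ := hK.full
  have := hK.smul_mem 0 le_rfl x (interior_subset hx)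
  simpa using this

lemma add_mem (hK : IsProperCone K) {a b : Fin n → ℝ} (ha : a ∈ K) (hb : b ∈ K) :
    a + b ∈ K := by
  have h := hK.convex ha hb (by norm_num : (0:ℝ) ≤ 1/2) (by norm_num : (0:ℝ) ≤ 1/2)
    (by norm_num)
  have h2 := hK.smul_mem 2 (by norm_num) _ h
  have : (2:ℝ) • ((1/2:ℝ) • a + (1/2:ℝ) • b) = a + b := by
    rw [smul_add, smul_smul, smul_smul]; norm_num
  rwa [this] at h2

lemma eq_zero_of_mem_of_neg_mem (hK : IsProperCone K) {a : Fin n → ℝ}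
    (ha : a ∈ K) (ha' : -a ∈ K) : a = 0 := by
  have : a ∈ K ∩ (-K) := ⟨ha, by simpa [Set.mem_neg] using ha'⟩
  rw [hK.pointed] at this
  simpa using this

/-- In a pointed closed cone, `‖a‖` is controlled by `‖a + b‖` for `a, b ∈ K`. -/
lemma norm_bound (hK : IsProperCone K) :
    ∃ C : ℝ, 0 < C ∧ ∀ a ∈ K, ∀ b ∈ K, ‖a‖ ≤ C * ‖a + b‖ := by
  by_cases h0 : ∀ a ∈ K, a = (0 : Fin n → ℝ)
  · refine ⟨1, one_pos, fun a ha b _ => ?_⟩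
    rw [h0 a ha]
    simp [norm_nonneg]
  · push_neg at h0
    obtain ⟨a₀, ha₀K, ha₀⟩ := h0
    have ha₀n : (0:ℝ) < ‖a₀‖ := norm_pos_iff.mpr ha₀
    set u : Fin n → ℝ := ‖a₀‖⁻¹ • a₀ with hu
    have huK : u ∈ K := hK.smul_mem _ (inv_nonneg.mpr ha₀n.le) _ ha₀K
    have hun : ‖u‖ = 1 := by
      rw [hu, norm_smul, norm_inv, norm_norm, inv_mul_cancel₀ ha₀n.ne']
    set T : Set ((Fin n → ℝ) × (Fin n → ℝ)) :=
      (K ∩ Metric.sphere 0 1) ×ˢ (K ∩ Metric.closedBall 0 2) with hT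
    have hTc : IsCompact T := by
      refine IsCompact.prod ?_ ?_
      · exact (isCompact_sphere 0 1).inter_left hK.isClosed
      · exact (isCompact_closedBall 0 2).inter_left hK.isClosed
    have hTne : T.Nonempty := by
      refine ⟨(u, 0), ⟨⟨huK, ?_⟩, ⟨zero_mem hK, ?_⟩⟩⟩
      · simpa [mem_sphere_zero_iff_norm] using hun
      · simp
    have hf : ContinuousOn (fun p : (Fin n → ℝ) × (Fin n → ℝ) => ‖p.1 + p.2‖) T :=
      ((continuous_fst.add continuous_snd).norm).continuousOn
    obtain ⟨p₀, hp₀T, hp₀min'⟩ := hTc.exists_isMinOn hTne hf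
    have hp₀min : ∀ q ∈ T, ‖p₀.1 + p₀.2‖ ≤ ‖q.1 + q.2‖ := fun q hq => hp₀min' hq
    set δ : ℝ := ‖p₀.1 + p₀.2‖ with hδ
    have hδpos : 0 < δ := by
      rcases hp₀T with ⟨⟨h1K, h1s⟩, ⟨h2K, _⟩⟩
      rcases (norm_nonneg (p₀.1 + p₀.2)).lt_or_eq with h | h
      · exact h
      · exfalso
        have hsum : p₀.1 + p₀.2 = 0 := norm_eq_zero.mp h.symm
        have hneg : -p₀.1 = p₀.2 := neg_eq_of_add_eq_zero_right hsum
        have : p₀.1 = 0 := eq_zero_of_mem_of_neg_mem hK h1K (hneg ▸ h2K)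
        rw [mem_sphere_zero_iff_norm] at h1s
        simp [this] at h1s
    set c : ℝ := min δ 1 with hc
    have hcpos : 0 < c := lt_min hδpos one_pos
    refine ⟨c⁻¹, inv_pos.mpr hcpos, fun a haK b hbK => ?_⟩
    by_cases ha : a = 0
    · simp [ha]
      positivity
    · have han : (0:ℝ) < ‖a‖ := norm_pos_iff.mpr ha
      have key : c ≤ ‖a‖⁻¹ * ‖a + b‖ := by
        set a' := ‖a‖⁻¹ • a with ha'
        set b' := ‖a‖⁻¹ • b with hb'
        have ha'K : a' ∈ K := hK.smul_mem _ (inv_nonneg.mpr han.le) _ haK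
        have hb'K : b' ∈ K := hK.smul_mem _ (inv_nonneg.mpr han.le) _ hbK
        have ha'n : ‖a'‖ = 1 := by
          rw [ha', norm_smul, norm_inv, norm_norm, inv_mul_cancel₀ han.ne']
        have hsum : ‖a' + b'‖ = ‖a‖⁻¹ * ‖a + b‖ := by
          rw [ha', hb', ← smul_add, norm_smul, norm_inv, norm_norm]
        by_cases hb2 : ‖b'‖ ≤ 2
        · have : δ ≤ ‖a' + b'‖ := by
            have := hp₀min (a', b') ⟨⟨ha'K, by simpa [mem_sphere_zero_iff_norm] using ha'n⟩,
              ⟨hb'K, by simpa [Metric.mem_closedBall, dist_zero_right] using hb2⟩⟩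
            exact this
          rw [← hsum]
          exact le_trans (min_le_left _ _) this
        · push_neg at hb2
          have : (1:ℝ) ≤ ‖a' + b'‖ := by
            have h1 : ‖b'‖ ≤ ‖a' + b'‖ + ‖a'‖ := by
              calc ‖b'‖ = ‖(a' + b') - a'‖ := by congr 1; abel
                _ ≤ ‖a' + b'‖ + ‖a'‖ := norm_sub_le _ _
            rw [ha'n] at h1
            linarith
          rw [← hsum]
          exact le_trans (min_le_right _ _) this
      have : c * ‖a‖ ≤ ‖a + b‖ := by
        have h2 := mul_le_mul_of_nonneg_right key han.le
        have h3 : ‖a‖⁻¹ * ‖a + b‖ * ‖a‖ = ‖a + b‖ := by field_simp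
        linarith
      calc ‖a‖ = c⁻¹ * (c * ‖a‖) := by
            rw [← mul_assoc, inv_mul_cancel₀ hcpos.ne', one_mul]
        _ ≤ c⁻¹ * ‖a + b‖ := by
            exact mul_le_mul_of_nonneg_left this (inv_nonneg.mpr hcpos.le)

lemma pow_mulVec_mem (hK : IsProperCone K) {A : Matrix (Fin n) (Fin n) ℝ}
    (hA : ∀ v ∈ K, A.mulVec v ∈ K) (m : ℕ) {y : Fin n → ℝ} (hy : y ∈ K) :
    (A ^ m).mulVec y ∈ K := by
  induction m with
  | zero => simpa using hy
  | succ m ih =>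
      rw [pow_succ', ← mulVec_mulVec]
      exact hA _ ih

theorem key_general (hK : IsProperCone K)
    (A : Matrix (Fin n) (Fin n) ℝ) (hA : ∀ v ∈ K, A.mulVec v ∈ K) (r : ℝ)
    (hx : ∃ x ∈ interior K, r • x - A.mulVec x ∈ K) :
    {v : Fin n → ℝ |
        ((r • (1 : Matrix (Fin n) (Fin n) ℝ) - A) ^ 2).mulVec v = 0} =
      {v : Fin n → ℝ |
        (r • (1 : Matrix (Fin n) (Fin n) ℝ) - A).mulVec v = 0} := by
  obtain ⟨x, hxi, hxr⟩ := hx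
  set B : Matrix (Fin n) (Fin n) ℝ := r • (1 : Matrix (Fin n) (Fin n) ℝ) - A with hB
  have hBmul : ∀ v : Fin n → ℝ, B.mulVec v = r • v - A.mulVec v := by
    intro v
    rw [hB, sub_mulVec, smul_mulVec, one_mulVec]
  have hB2 : ∀ v : Fin n → ℝ, (B ^ 2).mulVec v = B.mulVec (B.mulVec v) := by
    intro v
    rw [sq, ← mulVec_mulVec]
  -- handle the degenerate case `x = 0` (then the space is trivial)
  by_cases hx0 : x = 0
  · have hKuniv : K = Set.univ := by
      rw [hx0] at hxi
      ext y
      simp only [Set.mem_univ, iff_true]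
      obtain ⟨ε, hε, hball⟩ := Metric.isOpen_iff.mp isOpen_interior 0 hxi
      set c : ℝ := ε / (2 * (‖y‖ + 1)) with hcdef
      have hypos : (0:ℝ) < ‖y‖ + 1 := by positivity
      have hcpos : 0 < c := by positivity
      have hmem : c • y ∈ K := by
        apply interior_subset
        apply hball
        rw [Metric.mem_ball, dist_zero_right, norm_smul, Real.norm_eq_abs,
          abs_of_pos hcpos, hcdef]
        calc ε / (2 * (‖y‖ + 1)) * ‖y‖ < ε / (2 * (‖y‖ + 1)) * (‖y‖+1) := by
              apply mul_lt_mul_of_pos_left (by linarith) (by positivity)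
          _ = ε / 2 := by field_simp
          _ < ε := by linarith
      have := hK.smul_mem c⁻¹ (inv_nonneg.mpr hcpos.le) _ hmem
      rwa [smul_smul, inv_mul_cancel₀ hcpos.ne', one_smul] at this
    have htriv : ∀ y : Fin n → ℝ, y = 0 := by
      intro y
      have hy : y ∈ K ∩ (-K) := by
        constructor
        · rw [hKuniv]; trivial
        · rw [Set.mem_neg, hKuniv]; trivial
      rw [hK.pointed] at hy
      simpa using hy
    ext v
    simp only [Set.mem_setOf_eq]
    rw [htriv ((B^2).mulVec v), htriv (B.mulVec v)]
  -- now `x ≠ 0`; first deal with `r ≤ 0`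
  have hxK : x ∈ K := interior_subset hxi
  rcases lt_trichotomy r 0 with hr | hr | hr
  · exfalso
    have hAx : A.mulVec x ∈ K := hA x hxK
    have h1 : -(r • x - A.mulVec x) ∈ K := by
      have : -(r • x - A.mulVec x) = A.mulVec x + (-r) • x := by
        rw [neg_sub, neg_smul]; abel
      rw [this]
      exact add_mem hK hAx (hK.smul_mem _ (by linarith) _ hxK)
    have h2 : r • x - A.mulVec x = 0 := eq_zero_of_mem_of_neg_mem hK hxr h1
    have hAxr : A.mulVec x = r • x := (sub_eq_zero.mp h2).symm
    have h3 : r • x ∈ K := hAxr ▸ hAx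
    have h4 : -(r • x) ∈ K := by
      rw [← neg_smul]
      exact hK.smul_mem _ (by linarith) _ hxK
    have h5 : r • x = 0 := eq_zero_of_mem_of_neg_mem hK h3 h4
    exact hx0 (by simpa [smul_eq_zero, hr.ne] using h5)
  · -- r = 0 : then `A = 0` on the whole space
    have hAx : A.mulVec x ∈ K := hA x hxK
    have hAx0 : A.mulVec x = 0 := by
      apply eq_zero_of_mem_of_neg_mem hK hAx
      rw [hr] at hxr
      simpa using hxr
    have hAzero : ∀ v : Fin n → ℝ, A.mulVec v = 0 := by
      intro v
      obtain ⟨ε, hε, hball⟩ := Metric.isOpen_iff.mp isOpen_interior x hxi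
      set c : ℝ := ε / (2 * (‖v‖ + 1)) with hcdef
      have hcpos : 0 < c := by positivity
      have hdist : ∀ s : ℝ, |s| = 1 → x + (s * c) • v ∈ K := by
        intro s hs
        apply interior_subset
        apply hball
        rw [Metric.mem_ball, dist_eq_norm]
        have : x + (s * c) • v - x = (s * c) • v := by abel
        rw [this, norm_smul, Real.norm_eq_abs, abs_mul, hs, one_mul,
          abs_of_pos hcpos, hcdef]
        calc ε / (2 * (‖v‖ + 1)) * ‖v‖ ≤ ε / (2 * (‖v‖ + 1)) * (‖v‖+1) := by
              apply mul_le_mul_of_nonneg_left (by linarith) (by positivity)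
          _ = ε / 2 := by field_simp
          _ < ε := by linarith
      have hmem : ∀ s : ℝ, |s| = 1 → (s * c) • A.mulVec v ∈ K := by
        intro s hs
        have := hA _ (hdist s hs)
        rwa [mulVec_add, hAx0, zero_add, mulVec_smul] at this
      have h1 := hmem 1 (by norm_num)
      have h2 := hmem (-1) (by norm_num)
      have h1' : c • A.mulVec v ∈ K := by simpa using h1
      have h2' : -(c • A.mulVec v) ∈ K := by
        simpa [neg_one_mul, neg_smul] using h2
      have := eq_zero_of_mem_of_neg_mem hK h1' h2'
      have hcv : A.mulVec v = c⁻¹ • (c • A.mulVec v) := by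
        rw [smul_smul, inv_mul_cancel₀ hcpos.ne', one_smul]
      rw [hcv, this, smul_zero]
    have hBzero : ∀ v : Fin n → ℝ, B.mulVec v = 0 := by
      intro v
      rw [hBmul, hAzero, hr, zero_smul, sub_zero]
    ext v
    simp only [Set.mem_setOf_eq]
    simp [hB2, hBzero]
  -- main case `0 < r`
  · obtain ⟨C, hC, hbd⟩ := norm_bound hK
    -- powers of A applied to x stay dominated by r^m • x
    have hdom : ∀ m : ℕ, r ^ m • x - (A ^ m).mulVec x ∈ K := by
      intro m
      induction m with
      | zero => simpa using zero_mem hK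
      | succ m ih =>
          have h1 : r • (r ^ m • x - (A ^ m).mulVec x) ∈ K :=
            hK.smul_mem _ hr.le _ ih
          have h2 : (A ^ m).mulVec (r • x - A.mulVec x) ∈ K :=
            pow_mulVec_mem hK hA m hxr
          have h3 := add_mem hK h1 h2
          have heq : r • (r ^ m • x - (A ^ m).mulVec x)
              + (A ^ m).mulVec (r • x - A.mulVec x)
              = r ^ (m+1) • x - (A ^ (m+1)).mulVec x := by
            have h4 : (A ^ (m+1)).mulVec x = (A ^ m).mulVec (A.mulVec x) := by
              rw [mulVec_mulVec, ← pow_succ]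
            rw [mulVec_sub, mulVec_smul, smul_sub, h4, pow_succ]
            match_scalars <;> ring
          rwa [heq] at h3
    have hnorm : ∀ m : ℕ, ‖(A ^ m).mulVec x‖ ≤ C * (r ^ m * ‖x‖) := by
      intro m
      have h1 := hbd _ (pow_mulVec_mem hK hA m hxK) _ (hdom m)
      have h2 : (A ^ m).mulVec x + (r ^ m • x - (A ^ m).mulVec x) = r ^ m • x := by
        abel
      rw [h2, norm_smul, Real.norm_eq_abs, abs_of_pos (pow_pos hr m)] at h1
      exact h1
    -- the key limit argument
    have key : ∀ v w : Fin n → ℝ, A.mulVec v = r • v - w → A.mulVec w = r • w →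
        -w ∈ K := by
      intro v w hv hw
      -- A^(m+1) v = r^(m+1) v - (m+1) r^m w
      have hpow : ∀ m : ℕ, (A ^ (m+1)).mulVec v
          = r ^ (m+1) • v - ((m+1 : ℝ) * r ^ m) • w := by
        intro m
        induction m with
        | zero => simpa using hv
        | succ m ih =>
            rw [pow_succ', ← mulVec_mulVec, ih, mulVec_sub, mulVec_smul,
              mulVec_smul, hv, hw]
            match_scalars <;> push_cast <;> ring
      -- find ε with x + ε v ∈ K
      obtain ⟨ε₀, hε₀, hball⟩ := Metric.isOpen_iff.mp isOpen_interior x hxi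
      set ε : ℝ := ε₀ / (2 * (‖v‖ + 1)) with hεdef
      have hεpos : 0 < ε := by positivity
      have hxv : x + ε • v ∈ K := by
        apply interior_subset
        apply hball
        rw [Metric.mem_ball, dist_eq_norm]
        have : x + ε • v - x = ε • v := by abel
        rw [this, norm_smul, Real.norm_eq_abs, abs_of_pos hεpos, hεdef]
        calc ε₀ / (2 * (‖v‖ + 1)) * ‖v‖ ≤ ε₀ / (2 * (‖v‖ + 1)) * (‖v‖+1) := by
              apply mul_le_mul_of_nonneg_left (by linarith) (by positivity)
          _ = ε₀ / 2 := by field_simp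
          _ < ε₀ := by linarith
      -- the sequence
      set g : ℕ → (Fin n → ℝ) := fun m =>
        (((m:ℝ)+1) * r ^ m)⁻¹ • (A ^ (m+1)).mulVec x
          + (ε * r / ((m:ℝ)+1)) • v - ε • w with hg
      have hgK : ∀ m : ℕ, g m ∈ K := by
        intro m
        have hc : (0:ℝ) < ((m:ℝ)+1) * r ^ m := by positivity
        have hmem : (((m:ℝ)+1) * r ^ m)⁻¹ • (A ^ (m+1)).mulVec (x + ε • v) ∈ K :=
          hK.smul_mem _ (inv_nonneg.mpr hc.le) _
            (pow_mulVec_mem hK hA (m+1) hxv)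
        have hm1 : ((m:ℝ)+1) ≠ 0 := by positivity
        have hr0 : r ≠ 0 := hr.ne'
        have heq : (((m:ℝ)+1) * r ^ m)⁻¹ • (A ^ (m+1)).mulVec (x + ε • v) = g m := by
          rw [mulVec_add, mulVec_smul, hpow m, hg]
          match_scalars
          · field_simp
          · rw [pow_succ]
            field_simp
          · field_simp
        rwa [heq] at hmem
      have hlim : Tendsto g atTop (𝓝 (-(ε • w))) := by
        have h0 : Tendsto (fun m : ℕ => (((m:ℝ)+1) * r ^ m)⁻¹ • (A ^ (m+1)).mulVec x)
            atTop (𝓝 0) := by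
          have hbnd : ∀ m : ℕ,
              ‖(((m:ℝ)+1) * r ^ m)⁻¹ • (A ^ (m+1)).mulVec x‖
                ≤ C * r * ‖x‖ / ((m:ℝ)+1) := by
            intro m
            rw [norm_smul, Real.norm_eq_abs]
            have hc : (0:ℝ) < ((m:ℝ)+1) * r ^ m := by positivity
            rw [abs_of_pos (inv_pos.mpr hc)]
            calc (((m:ℝ)+1) * r ^ m)⁻¹ * ‖(A ^ (m+1)).mulVec x‖
                ≤ (((m:ℝ)+1) * r ^ m)⁻¹ * (C * (r ^ (m+1) * ‖x‖)) := by
                  exact mul_le_mul_of_nonneg_left (hnorm (m+1)) (inv_nonneg.mpr hc.le)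
              _ = C * r * ‖x‖ / ((m:ℝ)+1) := by
                  rw [pow_succ]
                  field_simp
          have htnd : Tendsto (fun m : ℕ => C * r * ‖x‖ / ((m:ℝ)+1)) atTop (𝓝 0) := by
            apply Tendsto.div_atTop tendsto_const_nhds
            exact tendsto_atTop_add_const_right atTop 1 tendsto_natCast_atTop_atTop
          exact squeeze_zero_norm hbnd htnd
        have h1 : Tendsto (fun m : ℕ => (ε * r / ((m:ℝ)+1)) • v) atTop (𝓝 0) := by
          have := Tendsto.div_atTop (tendsto_const_nhds (x := ε * r))
            (tendsto_atTop_add_const_right atTop 1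
              (tendsto_natCast_atTop_atTop (R := ℝ)))
          have h2 := this.smul_const v
          simpa using h2
        have := (h0.add h1).sub (tendsto_const_nhds (x := ε • w))
        simpa [hg] using this
      have hmem : -(ε • w) ∈ K :=
        hK.isClosed.mem_of_tendsto hlim (Eventually.of_forall hgK)
      have : ε⁻¹ • (-(ε • w)) = -w := by
        rw [smul_neg, smul_smul, inv_mul_cancel₀ hεpos.ne', one_smul]
      rw [← this]
      exact hK.smul_mem _ (inv_nonneg.mpr hεpos.le) _ hmem
    -- conclude
    ext v
    simp only [Set.mem_setOf_eq]
    constructor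
    · intro hv
      set w : Fin n → ℝ := B.mulVec v with hwdef
      have hBw : B.mulVec w = 0 := by rw [hwdef, ← hB2]; exact hv
      have hAw : A.mulVec w = r • w := by
        have h := (hBmul w).symm.trans hBw
        exact (sub_eq_zero.mp h).symm
      have hAv : A.mulVec v = r • v - w := by
        rw [hwdef, hBmul]
        abel
      have h1 : -w ∈ K := key v w hAv hAw
      have h2 : -(-w) ∈ K := by
        have hAv' : A.mulVec (-v) = r • (-v) - (-w) := by
          rw [mulVec_neg, hAv]
          module
        have hAw' : A.mulVec (-w) = r • (-w) := by
          rw [mulVec_neg, hAw]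
          module
        exact key (-v) (-w) hAv' hAw'
      have hwK : w ∈ K := by simpa using h2
      have := eq_zero_of_mem_of_neg_mem hK hwK h1
      rwa [hwdef] at this
    · intro hv
      rw [hB2, hv, mulVec_zero]

end Stmt16Aux

theorem stmt16 {n : ℕ} {K : Set (Fin n → ℝ)} (hK : IsProperCone K)
    (A : Matrix (Fin n) (Fin n) ℝ) (hA : ∀ v ∈ K, A.mulVec v ∈ K)
    (hx : ∃ x ∈ interior K, rho A • x - A.mulVec x ∈ K) :
    {v : Fin n → ℝ |
        ((rho A • (1 : Matrix (Fin n) (Fin n) ℝ) - A) ^ 2).mulVec v = 0} =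
      {v : Fin n → ℝ |
        (rho A • (1 : Matrix (Fin n) (Fin n) ℝ) - A).mulVec v = 0} := by
  exact Stmt16Aux.key_general hK A hA (rho A) hx
end

section
/- Let K be a proper cone in ℝⁿ, A an n×n real matrix with AK ⊆ K, x ∈ K, and λ ∈ ℝ. If (A - λI)^j x is a nonzero element of K for every nonnegative integer j, then λ < ρ_x(A). -/
open Filter Matrix
open scoped Topology

section Stmt18Aux
open Polynomial Finset
namespace Stmt18Aux

variable {n : ℕ} {K : Set (Fin n → ℝ)}

lemma cone_add (hK : IsProperCone K) {u v : Fin n → ℝ} (hu : u ∈ K) (hv : v ∈ K) :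
    u + v ∈ K := by
  have := hK.convex hu hv (by norm_num : (0:ℝ) ≤ 1/2) (by norm_num : (0:ℝ) ≤ 1/2) (by norm_num)
  have h2 := hK.smul_mem 2 (by norm_num) _ this
  rwa [smul_add, smul_smul, smul_smul, show (2:ℝ) * (1/2) = 1 by norm_num, one_smul, one_smul] at h2

lemma cone_zero (hK : IsProperCone K) : (0 : Fin n → ℝ) ∈ K := by
  have : (0 : Fin n → ℝ) ∈ K ∩ (-K) := by rw [hK.pointed]; rfl
  exact this.1

lemma cone_sum (hK : IsProperCone K) {ι : Type*} (s : Finset ι) (f : ι → Fin n → ℝ)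
    (hf : ∀ i ∈ s, f i ∈ K) : ∑ i ∈ s, f i ∈ K := by
  classical
  induction s using Finset.induction with
  | empty => simpa using cone_zero hK
  | insert _ _ hns ih =>
    rw [Finset.sum_insert hns]
    exact cone_add hK (hf _ (Finset.mem_insert_self _ _))
      (ih fun i hi => hf i (Finset.mem_insert_of_mem hi))

lemma cone_tsum (hK : IsProperCone K) (f : ℕ → Fin n → ℝ) (hs : Summable f)
    (hf : ∀ i, f i ∈ K) : ∑' i, f i ∈ K := by
  refine hK.isClosed.mem_of_tendsto hs.hasSum.tendsto_sum_nat ?_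
  exact Eventually.of_forall fun N => cone_sum hK _ _ fun i _ => hf i

lemma exists_functional (hK : IsProperCone K) {y : Fin n → ℝ} (hy : y ∈ K) (hy0 : y ≠ 0) :
    ∃ w : (Fin n → ℝ) →L[ℝ] ℝ, (∀ v ∈ K, 0 ≤ w v) ∧ 0 < w y := by
  have hny : -y ∉ K := by
    intro hmem
    have : y ∈ K ∩ (-K) := ⟨hy, by simpa using hmem⟩
    rw [hK.pointed] at this
    exact hy0 this
  obtain ⟨f, u, hf, hu⟩ := geometric_hahn_banach_closed_point hK.convex hK.isClosed hny
  have hu0 : 0 < u := by simpa using hf 0 (cone_zero hK)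
  refine ⟨-f, fun v hv => ?_, ?_⟩
  · by_contra hneg
    push_neg at hneg
    have hpos : 0 < f v := by simpa using hneg
    obtain ⟨t, ht⟩ := Archimedean.arch u hpos
    have hmem : ((t+1 : ℕ) : ℝ) • v ∈ K := hK.smul_mem _ (by positivity) _ hv
    have h1 : ((t+1 : ℕ) : ℝ) * f v < u := by
      have := hf _ hmem
      rwa [_root_.map_smul, smul_eq_mul] at this
    have h2 : u ≤ (t : ℝ) * f v := by simpa [nsmul_eq_mul] using ht
    push_cast at h1
    nlinarith [hpos]
  · have : u < f (-y) := hu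
    rw [map_neg] at this
    simp only [ContinuousLinearMap.neg_apply]
    linarith








lemma matrix_bound (A : Matrix (Fin n) (Fin n) ℝ) :
    ∃ C : ℝ, 0 ≤ C ∧ ∀ v : Fin n → ℝ, ‖A.mulVec v‖ ≤ C * ‖v‖ := by
  let L := LinearMap.toContinuousLinearMap (Matrix.mulVecLin A)
  exact ⟨‖L‖, norm_nonneg _, fun v => L.le_opNorm v⟩

lemma matrix_pow_bound {A : Matrix (Fin n) (Fin n) ℝ} {C : ℝ} (hC0 : 0 ≤ C)
    (hC : ∀ v : Fin n → ℝ, ‖A.mulVec v‖ ≤ C * ‖v‖) (m : ℕ) (v : Fin n → ℝ) :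
    ‖(A ^ m).mulVec v‖ ≤ C ^ m * ‖v‖ := by
  induction m with
  | zero => simp [Matrix.one_mulVec]
  | succ m ih =>
    have h1 : (A ^ (m+1)).mulVec v = A.mulVec ((A ^ m).mulVec v) := by
      rw [Matrix.mulVec_mulVec, ← pow_succ']
    rw [h1]
    calc ‖A.mulVec ((A ^ m).mulVec v)‖ ≤ C * ‖(A ^ m).mulVec v‖ := hC _
      _ ≤ C * (C ^ m * ‖v‖) := by nlinarith [norm_nonneg ((A ^ m).mulVec v), ih]
      _ = C ^ (m+1) * ‖v‖ := by ring









lemma rho_bounded {A : Matrix (Fin n) (Fin n) ℝ} {x : Fin n → ℝ} {C : ℝ} (hC0 : 0 ≤ C)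
    (hC : ∀ v : Fin n → ℝ, ‖A.mulVec v‖ ≤ C * ‖v‖) :
    IsBoundedUnder (· ≤ ·) atTop (fun m : ℕ => ‖(A ^ m).mulVec x‖ ^ ((1 : ℝ) / m)) := by
  refine isBoundedUnder_of ⟨max 1 (C * max 1 ‖x‖), fun m => ?_⟩
  rcases Nat.eq_zero_or_pos m with rfl | hm
  · simp
  have hm0 : (m : ℝ) ≠ 0 := Nat.cast_ne_zero.2 hm.ne'
  have key : ‖(A ^ m).mulVec x‖ ^ ((1:ℝ)/m) ≤ (C ^ m * max 1 ‖x‖) ^ ((1:ℝ)/m) := by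
    apply Real.rpow_le_rpow (norm_nonneg _)
    · exact (matrix_pow_bound hC0 hC m x).trans
        (by nlinarith [pow_nonneg hC0 m, le_max_right (1:ℝ) ‖x‖, norm_nonneg x])
    · positivity
  refine key.trans (le_max_of_le_right ?_)
  rw [Real.mul_rpow (by positivity) (by positivity)]
  have h1 : (C ^ m : ℝ) ^ ((1:ℝ)/m) = C := by
    rw [← Real.rpow_natCast C m, ← Real.rpow_mul hC0]
    rw [mul_one_div, div_self hm0, Real.rpow_one]
  rw [h1]
  have h2 : (max 1 ‖x‖ : ℝ) ^ ((1:ℝ)/m) ≤ max 1 ‖x‖ := by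
    have := Real.rpow_le_rpow_of_exponent_le (le_max_left 1 ‖x‖)
      (show (1:ℝ)/m ≤ 1 by rw [div_le_one (by positivity)]; exact_mod_cast hm)
    simpa using this
  nlinarith [Real.rpow_nonneg (le_trans zero_le_one (le_max_left 1 ‖x‖)) ((1:ℝ)/m), h2, hC0,
    le_trans zero_le_one (le_max_left 1 ‖x‖)]

lemma rho_nonneg {A : Matrix (Fin n) (Fin n) ℝ} {x : Fin n → ℝ} {C : ℝ} (hC0 : 0 ≤ C)
    (hC : ∀ v : Fin n → ℝ, ‖A.mulVec v‖ ≤ C * ‖v‖) : 0 ≤ localRho A x := by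
  apply le_limsup_of_frequently_le
  · exact Frequently.of_forall fun m => Real.rpow_nonneg (norm_nonneg _) _
  · exact rho_bounded hC0 hC

/-- root test: if `localRho A x < t` then eventually `‖A^m x‖ ≤ t^m`. -/
lemma eventually_norm_le {A : Matrix (Fin n) (Fin n) ℝ} {x : Fin n → ℝ} {C t : ℝ} (hC0 : 0 ≤ C)
    (hC : ∀ v : Fin n → ℝ, ‖A.mulVec v‖ ≤ C * ‖v‖) (ht : localRho A x < t) :
    ∀ᶠ m : ℕ in atTop, ‖(A ^ m).mulVec x‖ ≤ t ^ m := by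
  have hev : ∀ᶠ m : ℕ in atTop, ‖(A ^ m).mulVec x‖ ^ ((1:ℝ)/m) < t :=
    eventually_lt_of_limsup_lt ht (rho_bounded hC0 hC)
  filter_upwards [hev, eventually_ge_atTop 1] with m hm hm1
  have hm0 : m ≠ 0 := by omega
  have ht0 : 0 ≤ t := le_of_lt (lt_of_le_of_lt (Real.rpow_nonneg (norm_nonneg _) _) hm)
  have := pow_le_pow_left₀ (Real.rpow_nonneg (norm_nonneg _) ((1:ℝ)/m)) hm.le m
  rwa [one_div, Real.rpow_inv_natCast_pow (norm_nonneg _) hm0] at this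



lemma pow_mulVec_mem {K : Set (Fin n → ℝ)} (hK : IsProperCone K)
    {A : Matrix (Fin n) (Fin n) ℝ} (hA : ∀ v ∈ K, A.mulVec v ∈ K) (m : ℕ)
    {v : Fin n → ℝ} (hv : v ∈ K) : (A ^ m).mulVec v ∈ K := by
  induction m with
  | zero => simpa [Matrix.one_mulVec] using hv
  | succ m ih =>
    have h1 : (A ^ (m+1)).mulVec v = A.mulVec ((A ^ m).mulVec v) := by
      rw [Matrix.mulVec_mulVec, ← pow_succ']
    rw [h1]; exact hA _ ih

lemma summable_aux {A : Matrix (Fin n) (Fin n) ℝ} {x : Fin n → ℝ} {C lam mu : ℝ} (hC0 : 0 ≤ C)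
    (hC : ∀ v : Fin n → ℝ, ‖A.mulVec v‖ ≤ C * ‖v‖) (hlam : 0 ≤ lam)
    (hrho : localRho A x ≤ lam) (hmu : lam < mu) :
    Summable (fun m : ℕ => (mu⁻¹) ^ (m+1) * ‖(A ^ m).mulVec x‖) := by
  set t := (lam + mu) / 2 with ht
  have htlt : t < mu := by rw [ht]; linarith
  have ht0 : 0 < t := by rw [ht]; linarith
  have hmu0 : 0 < mu := by linarith
  have hev : ∀ᶠ m : ℕ in atTop, ‖(A ^ m).mulVec x‖ ≤ t ^ m :=
    eventually_norm_le hC0 hC (lt_of_le_of_lt hrho (by rw [ht]; linarith))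
  clear_value t
  clear ht
  obtain ⟨N, hN⟩ := eventually_atTop.mp hev
  rw [← summable_nat_add_iff N]
  have hgeo : Summable (fun m : ℕ => (mu⁻¹) ^ (N+1) * t ^ N * (t / mu) ^ m) := by
    apply Summable.mul_left
    apply summable_geometric_of_lt_one (by positivity)
    rw [div_lt_one hmu0]; exact htlt
  apply Summable.of_nonneg_of_le (fun m => by positivity) (fun m => ?_) hgeo
  have h1 : ‖(A ^ (m + N)).mulVec x‖ ≤ t ^ (m + N) := hN _ (Nat.le_add_left _ _)
  calc (mu⁻¹) ^ (m + N + 1) * ‖(A ^ (m + N)).mulVec x‖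
      ≤ (mu⁻¹) ^ (m + N + 1) * t ^ (m + N) := by
        apply mul_le_mul_of_nonneg_left h1 (by positivity)
    _ = (mu⁻¹) ^ (N+1) * t ^ N * (t / mu) ^ m := by
        rw [div_pow, pow_add, pow_add, pow_add]
        field_simp
        ring_nf
        rw [← mul_pow, mul_inv_cancel₀ hmu0.ne', one_pow]


lemma shift_summable {a : ℕ → ℝ} {mu : ℝ} (hmu0 : 0 < mu)
    (hsum : Summable (fun m => (mu⁻¹) ^ (m+1) * a m)) (i : ℕ) :
    Summable (fun m => (mu⁻¹) ^ (m+1) * a (m+i)) := by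
  have h1 : Summable (fun m => (mu⁻¹) ^ (m+i+1) * a (m+i)) :=
    (summable_nat_add_iff i).mpr hsum
  apply (h1.mul_left (mu ^ i)).congr
  intro m
  have : mu ^ i * (mu⁻¹) ^ (m+i+1) = (mu⁻¹) ^ (m+1) := by
    rw [show m+i+1 = (m+1)+i by ring, pow_add]
    field_simp
    ring_nf
    rw [← mul_pow, mul_inv_cancel₀ hmu0.ne', one_pow]
  rw [← mul_assoc, this]

lemma poly_half {n : ℕ} (χ : Polynomial ℝ) (hχ : χ.Monic) (hdeg : χ.natDegree = n)
    (a : ℕ → ℝ) (lam b : ℝ) (hlam0 : 0 ≤ lam) (hb : 0 < b)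
    (hsum : ∀ mu : ℝ, lam < mu → Summable (fun m => (mu⁻¹) ^ (m+1) * a m))
    (hrecur : ∀ m, ∑ i ∈ range (n+1), χ.coeff i * a (m+i) = 0)
    (hbound : ∀ mu : ℝ, lam < mu → b ≤ (mu - lam) ^ (n+1) * ∑' m, (mu⁻¹) ^ (m+1) * a m) :
    False := by
  classical
  set Q : ℝ → ℝ := fun mu => ∑ i ∈ range (n+1), χ.coeff i * ∑ m ∈ range i, mu ^ (i-1-m) * a m
    with hQ
  -- generating function identity
  have hgen : ∀ mu : ℝ, lam < mu → χ.eval mu * (∑' m, (mu⁻¹) ^ (m+1) * a m) = Q mu := by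
    intro mu hmu
    have hmu0 : 0 < mu := lt_of_le_of_lt hlam0 hmu
    have hstep : ∀ i, i ≤ n → mu ^ i * (∑' m, (mu⁻¹) ^ (m+1) * a m) =
        (∑ m ∈ range i, mu ^ (i-1-m) * a m) + ∑' m, (mu⁻¹) ^ (m+1) * a (m+i) := by
      intro i _
      have hf : Summable (fun m => mu ^ i * ((mu⁻¹) ^ (m+1) * a m)) :=
        (hsum mu hmu).mul_left _
      rw [← tsum_mul_left]
      rw [← Summable.sum_add_tsum_nat_add i hf]
      congr 1
      · apply Finset.sum_congr rfl
        intro m hm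
        have hmi : m + 1 ≤ i := Finset.mem_range.mp hm
        have : mu ^ i = mu ^ (i-1-m) * mu ^ (m+1) := by
          rw [← pow_add]
          congr 1
          omega
        rw [this, mul_assoc, ← mul_assoc (mu ^ (m+1)), ← mul_pow,
          mul_inv_cancel₀ hmu0.ne', one_pow, one_mul]
      · apply tsum_congr
        intro m
        have : mu ^ i * (mu⁻¹) ^ (m+i+1) = (mu⁻¹) ^ (m+1) := by
          rw [show m+i+1 = (m+1)+i by ring, pow_add, mul_comm ((mu⁻¹)^(m+1)),
            ← mul_assoc, ← mul_pow, mul_inv_cancel₀ hmu0.ne', one_pow, one_mul]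
        rw [← mul_assoc, this]
    have heval : χ.eval mu = ∑ i ∈ range (n+1), χ.coeff i * mu ^ i := by
      rw [eval_eq_sum_range, hdeg]
    rw [heval, Finset.sum_mul]
    have : ∀ i ∈ range (n+1), χ.coeff i * mu ^ i * (∑' m, (mu⁻¹) ^ (m+1) * a m) =
        χ.coeff i * (∑ m ∈ range i, mu ^ (i-1-m) * a m)
          + χ.coeff i * ∑' m, (mu⁻¹) ^ (m+1) * a (m+i) := by
      intro i hi
      rw [mul_assoc, hstep i (by simpa [Nat.lt_succ_iff] using Finset.mem_range.mp hi),
        mul_add]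
    rw [Finset.sum_congr rfl this, Finset.sum_add_distrib]
    have hzero : ∑ i ∈ range (n+1), χ.coeff i * ∑' m, (mu⁻¹) ^ (m+1) * a (m+i) = 0 := by
      have hsums : ∀ i ∈ range (n+1), Summable (fun m => χ.coeff i * ((mu⁻¹) ^ (m+1) * a (m+i))) :=
        fun i _ => (shift_summable hmu0 (hsum mu hmu) i).mul_left _
      have hswap := Summable.tsum_finsetSum (f := fun i m => χ.coeff i * ((mu⁻¹) ^ (m+1) * a (m+i)))
        (s := range (n+1)) hsums
      have : ∀ i ∈ range (n+1), χ.coeff i * ∑' m, (mu⁻¹) ^ (m+1) * a (m+i)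
          = ∑' m, χ.coeff i * ((mu⁻¹) ^ (m+1) * a (m+i)) := fun i _ => (tsum_mul_left).symm
      rw [Finset.sum_congr rfl this, ← hswap]
      have : ∀ m : ℕ, ∑ i ∈ range (n+1), χ.coeff i * ((mu⁻¹) ^ (m+1) * a (m+i)) = 0 := by
        intro m
        have : ∑ i ∈ range (n+1), χ.coeff i * ((mu⁻¹) ^ (m+1) * a (m+i))
            = (mu⁻¹) ^ (m+1) * ∑ i ∈ range (n+1), χ.coeff i * a (m+i) := by
          rw [Finset.mul_sum]
          apply Finset.sum_congr rfl
          intro i _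
          ring
        rw [this, hrecur m, mul_zero]
      exact (tsum_congr this).trans tsum_zero
    rw [hzero, add_zero, hQ]
  -- χ ≠ 0 and root multiplicity
  have hχ0 : χ ≠ 0 := hχ.ne_zero
  set k := χ.rootMultiplicity lam with hk
  set q := χ /ₘ (X - C lam) ^ k with hq
  have hfact : (X - C lam) ^ k * q = χ := χ.pow_mul_divByMonic_rootMultiplicity_eq lam
  have hqlam : q.eval lam ≠ 0 := eval_divByMonic_pow_rootMultiplicity_ne_zero lam hχ0
  have hkn : k ≤ n := by
    have h1 : ((X - C lam) ^ k).natDegree ≤ χ.natDegree :=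
      natDegree_le_of_dvd (χ.pow_rootMultiplicity_dvd lam) hχ0
    simpa [natDegree_pow, natDegree_X_sub_C, hdeg] using h1
  -- choose a sequence of mu's approaching lam avoiding roots of χ
  have hchoice : ∀ t : ℕ, ∃ mu : ℝ, lam < mu ∧ mu < lam + 1/(t+1) ∧ χ.eval mu ≠ 0 := by
    intro t
    have hroots : {z : ℝ | χ.IsRoot z}.Finite := by
      apply Set.Finite.subset χ.roots.toFinset.finite_toSet
      intro z hz
      simpa [Multiset.mem_toFinset, Polynomial.mem_roots hχ0] using hz
    have hIoo : (Set.Ioo lam (lam + 1/((t:ℝ)+1))).Infinite :=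
      Set.Ioo_infinite (by
        have h0 : (0:ℝ) < 1/((t:ℝ)+1) := by positivity
        linarith)
    obtain ⟨mu, hmu⟩ := (hIoo.diff hroots).nonempty
    exact ⟨mu, hmu.1.1, hmu.1.2, hmu.2⟩
  choose mus hmus1 hmus2 hmus3 using hchoice
  have htend : Tendsto mus atTop (𝓝 lam) := by
    have h1 : Tendsto (fun t : ℕ => lam + 1/((t:ℝ)+1)) atTop (𝓝 lam) := by
      have := tendsto_one_div_add_atTop_nhds_zero_nat (𝕜 := ℝ)
      simpa using (tendsto_const_nhds (x := lam)).add this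
    exact tendsto_of_tendsto_of_tendsto_of_le_of_le (tendsto_const_nhds)
      h1 (fun t => (hmus1 t).le) (fun t => (hmus2 t).le)
  -- the quantity (mu - lam)^(n+1) * g(mu) tends to 0 along mus
  have hGtend : Tendsto (fun t => (mus t - lam) ^ (n+1) * ∑' m, ((mus t)⁻¹) ^ (m+1) * a m)
      atTop (𝓝 0) := by
    have hne : ∀ t, (mus t - lam) ^ (n+1) * ∑' m, ((mus t)⁻¹) ^ (m+1) * a m
        = (mus t - lam) ^ (n+1-k) * (Q (mus t) / q.eval (mus t)) := by
      intro t
      have hmu := hmus1 t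
      have hevalne := hmus3 t
      have hqne : q.eval (mus t) ≠ 0 := by
        intro hcontra
        apply hevalne
        rw [← hfact, eval_mul, hcontra, mul_zero]
      have hmlne : mus t - lam ≠ 0 := sub_ne_zero.mpr (hmus1 t).ne'
      have hg := hgen (mus t) hmu
      have hevalfact : χ.eval (mus t) = (mus t - lam) ^ k * q.eval (mus t) := by
        rw [← hfact, eval_mul, eval_pow, eval_sub, eval_X, eval_C]
      have hgsolve : (∑' m, ((mus t)⁻¹) ^ (m+1) * a m)
          = Q (mus t) / ((mus t - lam) ^ k * q.eval (mus t)) := by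
        rw [eq_div_iff (mul_ne_zero (pow_ne_zero _ hmlne) hqne)]
        rw [hevalfact] at hg
        linear_combination hg
      rw [hgsolve]
      rw [show (mus t - lam) ^ (n+1) = (mus t - lam) ^ (n+1-k) * (mus t - lam) ^ k by
        rw [← pow_add]; congr 1; omega]
      field_simp
    rw [funext hne]
    have hQcont : Continuous Q := by
      rw [hQ]
      apply continuous_finset_sum
      intro i _
      apply Continuous.mul continuous_const
      apply continuous_finset_sum
      intro m _
      exact (continuous_pow _).mul continuous_const
    have h1 : Tendsto (fun t => (mus t - lam) ^ (n+1-k)) atTop (𝓝 0) := by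
      have : Tendsto (fun t => mus t - lam) atTop (𝓝 0) := by
        have := htend.sub (tendsto_const_nhds : Tendsto (fun _ : ℕ => lam) atTop (𝓝 lam))
        simpa using this
      have := this.pow (n+1-k)
      rwa [zero_pow (by omega)] at this
    have h2 : Tendsto (fun t => Q (mus t) / q.eval (mus t)) atTop
        (𝓝 (Q lam / q.eval lam)) :=
      ((hQcont.tendsto lam).comp htend).div ((q.continuous.tendsto lam).comp htend) hqlam
    simpa using h1.mul h2
  have hle : ∀ t : ℕ, b ≤ (mus t - lam) ^ (n+1) * ∑' m, ((mus t)⁻¹) ^ (m+1) * a m :=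
    fun t => hbound (mus t) (hmus1 t)
  have hb0 : b ≤ 0 := ge_of_tendsto hGtend (Eventually.of_forall hle)
  linarith



lemma sum_mulVec' {ι : Type*} {n : ℕ} (s : Finset ι) (f : ι → Matrix (Fin n) (Fin n) ℝ)
    (z : Fin n → ℝ) : (∑ i ∈ s, f i).mulVec z = ∑ i ∈ s, (f i).mulVec z := by
  classical
  induction s using Finset.induction with
  | empty => simp [Matrix.zero_mulVec]
  | insert _ _ hns ih => rw [Finset.sum_insert hns, Finset.sum_insert hns, Matrix.add_mulVec, ih]

end Stmt18Aux

open Stmt18Aux Polynomial Finset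


theorem stmt18 {n : ℕ} {K : Set (Fin n → ℝ)} (hK : IsProperCone K)
    (A : Matrix (Fin n) (Fin n) ℝ) (hA : ∀ v ∈ K, A.mulVec v ∈ K)
    (x : Fin n → ℝ) (hx : x ∈ K) (lam : ℝ)
    (h : ∀ j : ℕ, ((A - lam • (1 : Matrix (Fin n) (Fin n) ℝ)) ^ j).mulVec x ∈ K ∧
      ((A - lam • (1 : Matrix (Fin n) (Fin n) ℝ)) ^ j).mulVec x ≠ 0) :
    lam < localRho A x := by
  classical
  by_contra hcon
  push_neg at hcon
  obtain ⟨C, hC0, hC⟩ := matrix_bound A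
  have hlam0 : 0 ≤ lam := (rho_nonneg hC0 hC).trans hcon
  set B := A - lam • (1 : Matrix (Fin n) (Fin n) ℝ) with hB
  set y : ℕ → (Fin n → ℝ) := fun j => (B ^ j).mulVec x with hy
  obtain ⟨w, hw0, hwy⟩ := exists_functional hK (h n).1 (h n).2
  set a : ℕ → ℝ := fun m => w ((A ^ m).mulVec x) with ha
  have ha0 : ∀ m, 0 ≤ a m := fun m => hw0 _ (pow_mulVec_mem hK hA m hx)
  -- commutation
  have hcomm : Commute A B := by
    rw [hB]
    exact (Commute.refl A).sub_right ((Commute.one_right A).smul_right lam)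
  have hswap : ∀ m j : ℕ, (A ^ m).mulVec (y j) = (B ^ j).mulVec ((A ^ m).mulVec x) := by
    intro m j
    simp only [hy]
    rw [Matrix.mulVec_mulVec, Matrix.mulVec_mulVec, (hcomm.pow_pow m j).eq]
  have hmemK : ∀ m j : ℕ, (A ^ m).mulVec (y j) ∈ K :=
    fun m j => pow_mulVec_mem hK hA m (h j).1
  choose D hD0 hD using fun j => matrix_bound (B ^ j)
  -- the resolvent-like series
  set F : ℝ → ℕ → ℕ → (Fin n → ℝ) :=
    fun mu j m => (mu⁻¹) ^ (m+1) • ((A ^ m).mulVec (y j)) with hF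
  have hsumF : ∀ mu : ℝ, lam < mu → ∀ j, Summable (F mu j) := by
    intro mu hmu j
    have hmu0 : 0 < mu := lt_of_le_of_lt hlam0 hmu
    apply Summable.of_norm
    have hbase := (summable_aux hC0 hC hlam0 hcon hmu).mul_left (D j)
    apply Summable.of_nonneg_of_le (fun m => norm_nonneg _) (fun m => ?_) hbase
    simp only [hF]
    rw [norm_smul]
    have h1 : ‖(A ^ m).mulVec (y j)‖ ≤ D j * ‖(A ^ m).mulVec x‖ := by
      rw [hswap]; exact hD j _
    have h2 : ‖(mu⁻¹) ^ (m+1)‖ = (mu⁻¹) ^ (m+1) := by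
      rw [Real.norm_eq_abs, abs_pow, abs_of_pos (inv_pos.mpr hmu0)]
    rw [h2]
    calc (mu⁻¹) ^ (m+1) * ‖(A ^ m).mulVec (y j)‖
        ≤ (mu⁻¹) ^ (m+1) * (D j * ‖(A ^ m).mulVec x‖) := by
          apply mul_le_mul_of_nonneg_left h1 (by positivity)
      _ = D j * ((mu⁻¹) ^ (m+1) * ‖(A ^ m).mulVec x‖) := by ring
  set S : ℝ → ℕ → (Fin n → ℝ) := fun mu j => ∑' m, F mu j m with hS
  have hSK : ∀ mu : ℝ, lam < mu → ∀ j, S mu j ∈ K := by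
    intro mu hmu j
    have hmu0 : 0 < mu := lt_of_le_of_lt hlam0 hmu
    exact cone_tsum hK _ (hsumF mu hmu j)
      (fun m => hK.smul_mem _ (by positivity) _ (hmemK m j))
  -- recursion for y
  have hyrec : ∀ j, y (j+1) = A.mulVec (y j) - lam • y j := by
    intro j
    simp only [hy]
    rw [pow_succ', ← Matrix.mulVec_mulVec]
    rw [hB, Matrix.sub_mulVec, Matrix.smul_mulVec, Matrix.one_mulVec]
  -- recursion for S
  have hSrec : ∀ mu : ℝ, lam < mu → ∀ j, S mu (j+1) = (mu - lam) • S mu j - y j := by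
    intro mu hmu j
    have hmu0 : 0 < mu := lt_of_le_of_lt hlam0 hmu
    have hterm : ∀ m, F mu (j+1) m = mu • F mu j (m+1) - lam • F mu j m := by
      intro m
      simp only [hF]
      rw [hyrec j, Matrix.mulVec_sub]
      have e1 : (A ^ m).mulVec (A.mulVec (y j)) = (A ^ (m+1)).mulVec (y j) := by
        rw [Matrix.mulVec_mulVec, ← pow_succ]
      have e2 : (A ^ m).mulVec (lam • y j) = lam • ((A ^ m).mulVec (y j)) := by
        rw [Matrix.mulVec_smul]
      rw [e1, e2, smul_sub]
      congr 1
      · rw [smul_smul]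
        congr 1
        rw [pow_succ, pow_succ]
        field_simp
        ring_nf
        rw [mul_inv_cancel₀ hmu0.ne', one_mul]
      · rw [smul_smul, smul_smul, mul_comm]
    have hsum1 : Summable (fun m => F mu j (m+1)) := (summable_nat_add_iff 1).mpr (hsumF mu hmu j)
    have htsum1 : ∑' m, F mu j (m+1) = S mu j - mu⁻¹ • y j := by
      have h0 := Summable.tsum_eq_zero_add (hsumF mu hmu j)
      simp only [hS]
      rw [h0]
      have hF0 : F mu j 0 = mu⁻¹ • y j := by
        simp only [hF]; simp [Matrix.one_mulVec]
      rw [hF0]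
      abel
    calc S mu (j+1) = ∑' m, (mu • F mu j (m+1) - lam • F mu j m) := by
          simp only [hS]; exact tsum_congr hterm
      _ = mu • (∑' m, F mu j (m+1)) - lam • S mu j := by
          rw [Summable.tsum_sub (hsum1.const_smul mu) ((hsumF mu hmu j).const_smul lam)]
          rw [Summable.tsum_const_smul mu hsum1, Summable.tsum_const_smul lam (hsumF mu hmu j)]
      _ = mu • (S mu j - mu⁻¹ • y j) - lam • S mu j := by rw [htsum1]
      _ = (mu - lam) • S mu j - y j := by
          rw [smul_sub, smul_smul, mul_inv_cancel₀ hmu0.ne', one_smul, sub_smul]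
          abel
  -- scalar chain
  have hchain : ∀ mu : ℝ, lam < mu → w (y n) ≤ (mu - lam)^(n+1) * w (S mu 0) := by
    intro mu hmu
    have hml0 : 0 ≤ mu - lam := by linarith
    have hs0 : ∀ j, 0 ≤ w (S mu j) := fun j => hw0 _ (hSK mu hmu j)
    have hb0 : ∀ j, 0 ≤ w (y j) := fun j => hw0 _ (h j).1
    have hkey : ∀ j, w (S mu (j+1)) = (mu - lam) * w (S mu j) - w (y j) := by
      intro j
      rw [hSrec mu hmu j, map_sub, _root_.map_smul, smul_eq_mul]
    have hsle : ∀ j, w (S mu j) ≤ (mu - lam)^j * w (S mu 0) := by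
      intro j
      induction j with
      | zero => simp
      | succ j ih =>
        have h1 : w (S mu (j+1)) ≤ (mu - lam) * w (S mu j) := by
          rw [hkey j]; linarith [hb0 j]
        calc w (S mu (j+1)) ≤ (mu - lam) * w (S mu j) := h1
          _ ≤ (mu - lam) * ((mu - lam)^j * w (S mu 0)) :=
              mul_le_mul_of_nonneg_left ih hml0
          _ = (mu - lam)^(j+1) * w (S mu 0) := by ring
    have hbn : w (y n) ≤ (mu - lam) * w (S mu n) := by
      have := hkey n; linarith [hs0 (n+1)]
    calc w (y n) ≤ (mu - lam) * w (S mu n) := hbn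
      _ ≤ (mu - lam) * ((mu - lam)^n * w (S mu 0)) :=
          mul_le_mul_of_nonneg_left (hsle n) hml0
      _ = (mu - lam)^(n+1) * w (S mu 0) := by ring
  have hwS0 : ∀ mu : ℝ, lam < mu → w (S mu 0) = ∑' m, (mu⁻¹)^(m+1) * a m := by
    intro mu hmu
    simp only [hS]
    rw [w.map_tsum (hsumF mu hmu 0)]
    apply tsum_congr
    intro m
    simp only [hF]
    rw [_root_.map_smul, smul_eq_mul]
    congr 1
    simp only [hy, ha, pow_zero, Matrix.one_mulVec]
  have hsuma : ∀ mu : ℝ, lam < mu → Summable (fun m => (mu⁻¹)^(m+1) * a m) := by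
    intro mu hmu
    have hmu0 : 0 < mu := lt_of_le_of_lt hlam0 hmu
    have hbase := (summable_aux hC0 hC hlam0 hcon hmu).mul_left ‖w‖
    apply Summable.of_nonneg_of_le
      (fun m => mul_nonneg (by positivity) (ha0 m)) (fun m => ?_) hbase
    have h1 : a m ≤ ‖w‖ * ‖(A ^ m).mulVec x‖ := by
      calc a m ≤ |a m| := le_abs_self _
        _ = ‖w ((A ^ m).mulVec x)‖ := rfl
        _ ≤ ‖w‖ * ‖(A ^ m).mulVec x‖ := w.le_opNorm _
    calc (mu⁻¹)^(m+1) * a m ≤ (mu⁻¹)^(m+1) * (‖w‖ * ‖(A ^ m).mulVec x‖) :=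
          mul_le_mul_of_nonneg_left h1 (by positivity)
      _ = ‖w‖ * ((mu⁻¹)^(m+1) * ‖(A ^ m).mulVec x‖) := by ring
  -- Cayley–Hamilton recurrence
  set χ := A.charpoly with hχ
  have hdeg : χ.natDegree = n := by
    rw [hχ, Matrix.charpoly_natDegree_eq_dim]; exact Fintype.card_fin n
  have hCH : ∑ i ∈ range (n+1), χ.coeff i • A ^ i = 0 := by
    have h1 := Matrix.aeval_self_charpoly A
    rw [Polynomial.aeval_eq_sum_range] at h1
    rw [← hχ, hdeg] at h1
    exact h1
  have hrecur : ∀ m, ∑ i ∈ range (n+1), χ.coeff i * a (m+i) = 0 := by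
    intro m
    have e : ∀ i ∈ range (n+1), χ.coeff i * a (m+i)
        = w (χ.coeff i • ((A ^ i).mulVec ((A ^ m).mulVec x))) := by
      intro i _
      rw [_root_.map_smul, smul_eq_mul]
      congr 1
      simp only [ha]
      congr 1
      rw [Matrix.mulVec_mulVec]
      congr 1
      rw [← pow_add, add_comm]
    rw [Finset.sum_congr rfl e, ← map_sum]
    have e3 : ∑ i ∈ range (n+1), χ.coeff i • ((A ^ i).mulVec ((A ^ m).mulVec x)) = 0 := by
      have e2 : ∀ i ∈ range (n+1), χ.coeff i • ((A ^ i).mulVec ((A ^ m).mulVec x))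
          = (χ.coeff i • A ^ i).mulVec ((A ^ m).mulVec x) :=
        fun i _ => (Matrix.smul_mulVec _ _ _).symm
      rw [Finset.sum_congr rfl e2, ← sum_mulVec', hCH, Matrix.zero_mulVec]
    rw [e3, map_zero]
  exact poly_half χ (A.charpoly_monic) hdeg a lam (w (y n)) hlam0 hwy hsuma hrecur
    (fun mu hmu => by rw [← hwS0 mu hmu]; exact hchain mu hmu)

end Stmt18Aux
end
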